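/- arXiv:2409.12543 — 7 statements merged into one kernel-verified Lean document; each statement's English description precedes it below -/
import Mathlib

section
/- Let X be a reflexive real Banach space, Y a real normed linear space, and T a compact linear operator from X to Y with operator norm 1 such that M_T = {x₀, −x₀} for some unit vector x₀ ∈ X. Then either every element of the kernel of T is Birkhoff–James orthogonal to x₀, or T is not a right-symmetric point of the space of compact operators from X to Y (i.e., there exists a compact operator A with A ⊥_B T but T is not Birkhoff–James orthogonal to A, orthogonality taken with respect to the operator norm). -/
/-- Birkhoff–James orthogonality: `x ⊥_B y` iff `‖x + λ • y‖ ≥ ‖x‖` for every real `λ`. -/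
def BJOrth {E : Type*} [NormedAddCommGroup E] [NormedSpace ℝ E] (x y : E) : Prop :=
  ∀ lam : ℝ, ‖x‖ ≤ ‖x + lam • y‖

/-- `x` is a left-symmetric point: `x ⊥_B y` implies `y ⊥_B x` for all `y`. -/
def LeftSymmetricPt {E : Type*} [NormedAddCommGroup E] [NormedSpace ℝ E] (x : E) : Prop :=
  ∀ y : E, BJOrth x y → BJOrth y x

/-- `x` is a right-symmetric point: `y ⊥_B x` implies `x ⊥_B y` for all `y`. -/
def RightSymmetricPt {E : Type*} [NormedAddCommGroup E] [NormedSpace ℝ E] (x : E) : Prop :=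
  ∀ y : E, BJOrth y x → BJOrth x y

/-- A nonzero `x` is a smooth point if there is exactly one norm-one continuous linear
functional `f` with `f x = ‖x‖`. -/
def SmoothPoint {E : Type*} [NormedAddCommGroup E] [NormedSpace ℝ E] (x : E) : Prop :=
  ∃! f : E →L[ℝ] ℝ, ‖f‖ = 1 ∧ f x = ‖x‖

/-- A normed space is reflexive if the canonical embedding into the double dual is onto. -/
def ReflexiveSpace (E : Type*) [NormedAddCommGroup E] [NormedSpace ℝ E] : Prop :=
  Function.Surjective (NormedSpace.inclusionInDoubleDual ℝ E)

/-- `T` (a compact operator) is a right-symmetric point of the space of compact operators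
(with the operator norm): `A ⊥_B T` implies `T ⊥_B A` for every compact operator `A`. -/
def RightSymmetricCompactOp {X Y : Type*} [NormedAddCommGroup X] [NormedSpace ℝ X]
    [NormedAddCommGroup Y] [NormedSpace ℝ Y] (T : X →L[ℝ] Y) : Prop :=
  ∀ A : X →L[ℝ] Y, IsCompactOperator A → BJOrth A T → BJOrth T A

/-- `T` is left orthogonality preserving at `x`: `x ⊥_B y` implies `T x ⊥_B T y`. -/
def LeftOPAt {X Y : Type*} [NormedAddCommGroup X] [NormedSpace ℝ X]
    [NormedAddCommGroup Y] [NormedSpace ℝ Y] (T : X →L[ℝ] Y) (x : X) : Prop :=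
  ∀ y : X, BJOrth x y → BJOrth (T x) (T y)

/-- Approximate Birkhoff–James orthogonality in the sense of Dragomir–Chmieliński:
`x ⊥_D^ε y` iff `‖x + λ • y‖ ≥ √(1 - ε²) * ‖x‖` for every real `λ`. -/
def ApproxOrthD {E : Type*} [NormedAddCommGroup E] [NormedSpace ℝ E]
    (ε : ℝ) (x y : E) : Prop :=
  ∀ lam : ℝ, Real.sqrt (1 - ε ^ 2) * ‖x‖ ≤ ‖x + lam • y‖

/-- Approximate Birkhoff–James orthogonality in the sense of Chmieliński:
`x ⊥_B^ε y` iff `‖x + λ • y‖² ≥ ‖x‖² - 2ε‖x‖‖λ • y‖` for every real `λ`. -/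
def ApproxOrthC {E : Type*} [NormedAddCommGroup E] [NormedSpace ℝ E]
    (ε : ℝ) (x y : E) : Prop :=
  ∀ lam : ℝ, ‖x‖ ^ 2 - 2 * ε * ‖x‖ * ‖lam • y‖ ≤ ‖x + lam • y‖ ^ 2

section AuxForProof

open Metric NormedSpace Filter Topology

variable {X : Type*} [NormedAddCommGroup X] [NormedSpace ℝ X]

lemma incl_coe :
    ⇑(NormedSpace.inclusionInDoubleDual ℝ X) = ⇑(NormedSpace.inclusionInDoubleDualLi ℝ (E := X)) := rfl

lemma weakBall_isCompact (hX : ReflexiveSpace X) :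
    IsCompact (toWeakSpaceCLM ℝ X '' closedBall (0 : X) 1) := by
  have hinj : Function.Injective (NormedSpace.inclusionInDoubleDual ℝ X) := by
    rw [incl_coe]; exact (NormedSpace.inclusionInDoubleDualLi ℝ (E := X)).injective
  set J := NormedSpace.inclusionInDoubleDual ℝ X with hJ
  have hbij : Function.Bijective J := ⟨hinj, hX⟩
  set e := Equiv.ofBijective _ hbij with he
  have hcomp : IsCompact (WeakDual.toStrongDual ⁻¹'
      closedBall (0 : StrongDual ℝ (StrongDual ℝ X)) 1) :=
    WeakDual.isCompact_closedBall (𝕜 := ℝ) (E := StrongDual ℝ X) 0 1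
  set h : WeakDual ℝ (StrongDual ℝ X) → WeakSpace ℝ X :=
    fun Φ => toWeakSpaceCLM ℝ X (e.symm (WeakDual.toStrongDual Φ)) with hh
  have hcont : Continuous h := by
    apply WeakBilin.continuous_of_continuous_eval
    intro f
    have hEq : (fun Φ : WeakDual ℝ (StrongDual ℝ X) =>
        (topDualPairing ℝ X).flip (h Φ) f) = fun Φ => Φ f := by
      funext Φ
      have h1 : (topDualPairing ℝ X).flip (h Φ) f
          = f (e.symm (WeakDual.toStrongDual Φ)) := rfl
      have h2 : f (e.symm (WeakDual.toStrongDual Φ))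
          = J (e.symm (WeakDual.toStrongDual Φ)) f := (NormedSpace.dual_def (𝕜 := ℝ) (E := X) _ f).symm
      have h3 : J (e.symm (WeakDual.toStrongDual Φ)) = WeakDual.toStrongDual Φ :=
        e.apply_symm_apply _
      rw [h1, h2, h3]
      rfl
    rw [hEq]
    exact WeakDual.eval_continuous f
  have himg := hcomp.image hcont
  convert himg using 1
  ext w
  constructor
  · rintro ⟨x, hx, rfl⟩
    refine ⟨StrongDual.toWeakDual (J x), ?_, ?_⟩
    · have : WeakDual.toStrongDual (StrongDual.toWeakDual (J x)) = J x :=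
        LinearEquiv.symm_apply_apply _ _
      simp only [Set.mem_preimage, this, mem_closedBall_zero_iff]
      refine (mem_closedBall_zero_iff (E := StrongDual ℝ (StrongDual ℝ X))).2 ?_
      calc ‖J x‖ = ‖x‖ := (NormedSpace.inclusionInDoubleDualLi ℝ (E := X)).norm_map x
      _ ≤ 1 := mem_closedBall_zero_iff.1 hx
    · have h4 : WeakDual.toStrongDual (StrongDual.toWeakDual (J x)) = J x :=
        LinearEquiv.symm_apply_apply _ _
      show toWeakSpaceCLM ℝ X (e.symm (WeakDual.toStrongDual (StrongDual.toWeakDual (J x))))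
        = toWeakSpaceCLM ℝ X x
      rw [h4]
      congr 1
      exact e.symm_apply_apply x
  · rintro ⟨Φ, hΦ, rfl⟩
    refine ⟨e.symm (WeakDual.toStrongDual Φ), ?_, rfl⟩
    rw [mem_closedBall_zero_iff]
    have h5 : ‖e.symm (WeakDual.toStrongDual Φ)‖
        = ‖J (e.symm (WeakDual.toStrongDual Φ))‖ :=
      ((NormedSpace.inclusionInDoubleDualLi ℝ (E := X)).norm_map _).symm
    have h6 : J (e.symm (WeakDual.toStrongDual Φ)) = WeakDual.toStrongDual Φ :=
      e.apply_symm_apply _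
    rw [h5, h6]
    exact (mem_closedBall_zero_iff (E := StrongDual ℝ (StrongDual ℝ X))).1 hΦ

section KeyAux

variable {Y : Type*} [NormedAddCommGroup Y] [NormedSpace ℝ Y]

/-- Extraction of values at a weak cluster point. -/
lemma cluster_value (hX : ReflexiveSpace X) {v : ℕ → X} (hv : ∀ k, ‖v k‖ ≤ 1) :
    ∃ uu : X, ‖uu‖ ≤ 1 ∧ ∀ (f : X →L[ℝ] ℝ) (L : ℝ),
      Tendsto (fun k => f (v k)) atTop (𝓝 L) → f uu = L := by
  have hcomp := weakBall_isCompact hX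
  set w : ℕ → WeakSpace ℝ X := fun k => toWeakSpaceCLM ℝ X (v k) with hw
  have hwmem : ∀ k, w k ∈ toWeakSpaceCLM ℝ X '' closedBall (0 : X) 1 :=
    fun k => ⟨v k, mem_closedBall_zero_iff.2 (hv k), rfl⟩
  have hle : Filter.map w atTop ≤ 𝓟 (toWeakSpaceCLM ℝ X '' closedBall (0 : X) 1) :=
    le_principal_iff.2 (Filter.mem_map.2 (Eventually.of_forall hwmem))
  haveI : (Filter.map w atTop).NeBot := Filter.map_neBot
  obtain ⟨wlim, hwlim, hclust⟩ := hcomp.exists_clusterPt hle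
  obtain ⟨uu, huu, rfl⟩ := hwlim
  refine ⟨uu, mem_closedBall_zero_iff.1 huu, ?_⟩
  intro f L hfL
  set φf : WeakSpace ℝ X → ℝ := fun ξ => (topDualPairing ℝ X).flip ξ f with hφf
  have hfc : Continuous φf := WeakBilin.eval_continuous _ f
  have hmap : ClusterPt (φf (toWeakSpaceCLM ℝ X uu))
      (Filter.map φf (Filter.map w atTop)) :=
    hclust.map hfc.continuousAt Filter.tendsto_map
  rw [Filter.map_map] at hmap
  have hEq : φf ∘ w = fun k => f (v k) := rfl
  rw [hEq] at hmap
  have hle2 : Filter.map (fun k => f (v k)) atTop ≤ 𝓝 L := hfL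
  have hne : (𝓝 (φf (toWeakSpaceCLM ℝ X uu)) ⊓ 𝓝 L).NeBot :=
    Filter.NeBot.mono hmap (inf_le_inf_left _ hle2)
  exact eq_of_nhds_neBot hne

lemma key_approx (hX : ReflexiveSpace X)
    (T : X →L[ℝ] Y) (hTc : IsCompactOperator T) (hT : ‖T‖ = 1)
    (x₀ : X) (hMT : {x : X | ‖x‖ = 1 ∧ ‖T x‖ = ‖T‖} = {x₀, -x₀})
    (g : X →L[ℝ] ℝ) {ε : ℝ} (hε : 0 < ε) :
    ∃ δ > 0, ∀ u : X, ‖u‖ ≤ 1 → 1 - δ ≤ ‖T u‖ →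
      ((‖T u - T x₀‖ ≤ ε ∧ |g u - g x₀| ≤ ε) ∨
       (‖T u + T x₀‖ ≤ ε ∧ |g u + g x₀| ≤ ε)) := by
  by_contra hcon
  push_neg at hcon
  have H : ∀ k : ℕ, ∃ u : X, ‖u‖ ≤ 1 ∧ 1 - 1/(k+1) ≤ ‖T u‖ ∧
      ¬((‖T u - T x₀‖ ≤ ε ∧ |g u - g x₀| ≤ ε) ∨
        (‖T u + T x₀‖ ≤ ε ∧ |g u + g x₀| ≤ ε)) := by
    intro k
    obtain ⟨u, h1, h2, h3, h4⟩ := hcon (1/(k+1)) (by positivity)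
    exact ⟨u, h1, h2, by
      push_neg
      exact ⟨h3, h4⟩⟩
  choose u h1 h2 h3 using H
  -- compact image: convergent subsequence of (T (u k))
  obtain ⟨K, hK, hKsub⟩ : ∃ K : Set Y, IsCompact K ∧ ⇑T '' closedBall 0 1 ⊆ K := by
    have := IsCompactOperator.image_subset_compact_of_bounded
      (𝕜₁ := ℝ) (f := (T : X →ₗ[ℝ] Y)) hTc (isBounded_closedBall (x := (0:X)) (r := 1))
    simpa using this
  have hTuK : ∀ k, T (u k) ∈ K := fun k =>
    hKsub ⟨u k, mem_closedBall_zero_iff.2 (h1 k), rfl⟩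
  obtain ⟨z, hzK, φ, hφ, hTφ⟩ := hK.tendsto_subseq hTuK
  -- convergent subsequence of g values
  have hgball : ∀ k, g (u (φ k)) ∈ closedBall (0 : ℝ) ‖g‖ := by
    intro k
    rw [mem_closedBall_zero_iff]
    calc ‖g (u (φ k))‖ ≤ ‖g‖ * ‖u (φ k)‖ := g.le_opNorm _
    _ ≤ ‖g‖ * 1 := by
        have := h1 (φ k); gcongr
    _ = ‖g‖ := mul_one _
  obtain ⟨t, _, ψ, hψ, hgψ⟩ := (isCompact_closedBall (0 : ℝ) ‖g‖).tendsto_subseq hgball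
  set v : ℕ → X := fun k => u (φ (ψ k)) with hvdef
  have hv1 : ∀ k, ‖v k‖ ≤ 1 := fun k => h1 _
  have hTv : Tendsto (fun k => T (v k)) atTop (𝓝 z) := hTφ.comp hψ.tendsto_atTop
  have hgv : Tendsto (fun k => g (v k)) atTop (𝓝 t) := hgψ
  -- lower bound on norms
  have hlow : ∀ k, 1 - 1/(k+1) ≤ ‖T (v k)‖ := by
    intro k
    refine le_trans ?_ (h2 (φ (ψ k)))
    have hk : (k : ℝ) ≤ (φ (ψ k) : ℝ) := by
      exact_mod_cast (hφ.comp hψ).le_apply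
    have : (1 : ℝ)/(φ (ψ k) + 1) ≤ 1/(k+1) := by
      apply one_div_le_one_div_of_le (by positivity)
      linarith
    linarith
  -- weak cluster point
  obtain ⟨uu, huu, hval⟩ := cluster_value hX hv1
  have hgu : g uu = t := hval g t hgv
  have hTu : T uu = z := by
    rw [NormedSpace.eq_iff_forall_dual_eq ℝ]
    intro f
    exact hval (f.comp T) (f z) ((f.continuous.tendsto z).comp hTv)
  have hz0 : 1 ≤ ‖z‖ := by
    have hlim : Tendsto (fun k : ℕ => 1 - 1/((k:ℝ)+1)) atTop (𝓝 1) := by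
      have := tendsto_one_div_add_atTop_nhds_zero_nat (𝕜 := ℝ)
      simpa using tendsto_const_nhds.sub this
    exact le_of_tendsto_of_tendsto' hlim hTv.norm hlow
  have hz1 : 1 ≤ ‖T uu‖ := by rw [hTu]; exact hz0
  have hTule : ‖T uu‖ ≤ ‖uu‖ := by
    have := T.le_opNorm uu; rw [hT, one_mul] at this; exact this
  have hun : ‖uu‖ = 1 := le_antisymm huu (le_trans hz1 hTule)
  have hTun : ‖T uu‖ = ‖T‖ := by
    rw [hT]
    exact le_antisymm (le_trans hTule (le_of_eq hun)) hz1
  have hmem : uu ∈ ({x₀, -x₀} : Set X) := by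
    rw [← hMT]; exact ⟨hun, hTun⟩
  -- eventual closeness
  obtain ⟨N1, hN1⟩ := Metric.tendsto_atTop.1 hTv ε hε
  obtain ⟨N2, hN2⟩ := Metric.tendsto_atTop.1 hgv ε hε
  set k0 := max N1 N2 with hk0
  have hd1 : ‖T (v k0) - z‖ < ε := by
    have := hN1 k0 (le_max_left _ _); rwa [dist_eq_norm] at this
  have hd2 : |g (v k0) - t| < ε := by
    have := hN2 k0 (le_max_right _ _); rwa [Real.dist_eq] at this
  have hbad := h3 (φ (ψ k0))
  rcases hmem with hx | hx
  · -- uu = x₀ : z = T x₀, t = g x₀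
    apply hbad
    left
    constructor
    · rw [← hx, hTu]; exact le_of_lt hd1
    · rw [← hx, hgu]; exact le_of_lt hd2
  · rw [Set.mem_singleton_iff] at hx
    apply hbad
    right
    constructor
    · have hzneg : z = -(T x₀) := by rw [← hTu, hx, map_neg]
      have : T (v k0) + T x₀ = T (v k0) - z := by rw [hzneg]; abel
      rw [this]; exact le_of_lt hd1
    · have htneg : t = -(g x₀) := by rw [← hgu, hx, map_neg]
      have : g (v k0) + g x₀ = g (v k0) - t := by rw [htneg]; ring
      rw [this]; exact le_of_lt hd2


end KeyAux

end AuxForProof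

open Metric NormedSpace Filter Topology in
set_option maxHeartbeats 2000000 in
/-- For a norm-one compact operator `T` from a reflexive Banach space `X` to a
normed space `Y` with `M_T = {x₀, -x₀}`, either every element of `ker T` is Birkhoff–James
orthogonal to `x₀`, or `T` is not right-symmetric in the space of compact operators. -/
theorem ker_orth_or_not_rightSymmetric {X Y : Type*}
    [NormedAddCommGroup X] [NormedSpace ℝ X] [CompleteSpace X]
    [NormedAddCommGroup Y] [NormedSpace ℝ Y]
    (hX : ReflexiveSpace X)
    (T : X →L[ℝ] Y) (hTc : IsCompactOperator T) (hT : ‖T‖ = 1)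
    (x₀ : X) (hx₀ : ‖x₀‖ = 1)
    (hMT : {x : X | ‖x‖ = 1 ∧ ‖T x‖ = ‖T‖} = {x₀, -x₀}) :
    (∀ y ∈ LinearMap.ker (T : X →ₗ[ℝ] Y), BJOrth y x₀) ∨
      ∃ A : X →L[ℝ] Y, IsCompactOperator A ∧ BJOrth A T ∧ ¬ BJOrth T A := by
  by_cases hker : ∀ y ∈ LinearMap.ker (T : X →ₗ[ℝ] Y), BJOrth y x₀
  · exact Or.inl hker
  right
  push_neg at hker
  obtain ⟨y, hyker, hynot⟩ := hker
  have hy0 : y ≠ 0 := by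
    rintro rfl
    exact hynot fun lam => by simpa using norm_nonneg _
  have hyn : ‖y‖ ≠ 0 := norm_ne_zero_iff.2 hy0
  obtain ⟨g, hg1, hgy⟩ := exists_dual_vector ℝ y hyn
  have hgy' : g y = ‖y‖ := by exact_mod_cast hgy
  have hTy : T y = 0 := by
    have := LinearMap.mem_ker.1 hyker
    simpa using this
  have hTx₀ : ‖T x₀‖ = 1 := by
    have hmem : x₀ ∈ {x : X | ‖x‖ = 1 ∧ ‖T x‖ = ‖T‖} := by
      rw [hMT]; exact Set.mem_insert _ _
    exact hmem.2.trans hT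
  have hc : g x₀ ≠ 0 := by
    intro hc0
    apply hynot
    intro lam
    calc ‖y‖ = g (y + lam • x₀) := by
          rw [map_add, map_smul, hgy', hc0, smul_eq_mul, mul_zero, add_zero]
    _ ≤ |g (y + lam • x₀)| := le_abs_self _
    _ ≤ ‖g‖ * ‖y + lam • x₀‖ := g.le_opNorm _
    _ = ‖y + lam • x₀‖ := by rw [hg1, one_mul]
  set A : X →L[ℝ] Y := g.smulRight (T x₀) with hA
  have hAapp : ∀ x : X, A x = g x • T x₀ := fun x => rfl
  refine ⟨A, ?_, ?_, ?_⟩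
  · -- compactness of A
    have hgc : IsCompactOperator (⇑g) := by
      refine ⟨closedBall 0 ‖g‖, isCompact_closedBall _ _, ?_⟩
      refine Filter.mem_of_superset (Metric.closedBall_mem_nhds (0 : X) one_pos) ?_
      intro x hx
      simp only [Set.mem_preimage, mem_closedBall_zero_iff] at *
      calc ‖g x‖ ≤ ‖g‖ * ‖x‖ := g.le_opNorm x
      _ ≤ ‖g‖ * 1 := by gcongr
      _ = ‖g‖ := mul_one _
    have hcont : Continuous fun a : ℝ => a • T x₀ := continuous_id.smul continuous_const
    have := hgc.continuous_comp hcont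
    exact this
  · -- BJOrth A T
    intro lam
    have hAop : ‖A‖ ≤ 1 := by
      refine A.opNorm_le_bound zero_le_one fun x => ?_
      rw [hAapp, norm_smul, hTx₀, mul_one, one_mul]
      calc ‖g x‖ ≤ ‖g‖ * ‖x‖ := g.le_opNorm x
      _ = ‖x‖ := by rw [hg1, one_mul]
    have hynorm : ‖‖y‖⁻¹ • y‖ = 1 := by
      rw [norm_smul, norm_inv, norm_norm, inv_mul_cancel₀ hyn]
    have happ : (A + lam • T) (‖y‖⁻¹ • y) = T x₀ := by
      rw [ContinuousLinearMap.add_apply, ContinuousLinearMap.smul_apply, hAapp,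
        map_smul, map_smul, hTy, smul_zero, smul_zero, add_zero, smul_eq_mul, hgy',
        inv_mul_cancel₀ hyn, one_smul]
    have hle : ‖(A + lam • T) (‖y‖⁻¹ • y)‖ ≤ ‖A + lam • T‖ := by
      have := (A + lam • T).le_opNorm (‖y‖⁻¹ • y)
      rwa [hynorm, mul_one] at this
    rw [happ, hTx₀] at hle
    exact le_trans hAop hle
  · -- ¬ BJOrth T A
    intro hB
    set c := g x₀ with hcdef
    have hcabs : 0 < |c| := abs_pos.2 hc
    have hε4 : 0 < |c|/4 := by positivity
    obtain ⟨δ₀, hδ₀, hkey⟩ := key_approx hX T hTc hT x₀ hMT g hε4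
    set δ := min δ₀ (1/2) with hδdef
    have hδpos : 0 < δ := lt_min hδ₀ (by norm_num)
    have hδhalf : δ ≤ 1/2 := min_le_right _ _
    set θ := min (δ/(2*|c|)) (1/(2*|c|)) with hθdef
    have hθpos : 0 < θ := lt_min (div_pos hδpos (by positivity)) (by positivity)
    have hθ1 : θ * |c| ≤ δ/2 := by
      calc θ * |c| ≤ (δ/(2*|c|)) * |c| := by
            have := min_le_left (δ/(2*|c|)) (1/(2*|c|)); gcongr
      _ = δ/2 := by
            field_simp
    have hθ2 : θ * |c| ≤ 1/2 := by
      calc θ * |c| ≤ (1/(2*|c|)) * |c| := by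
            have := min_le_right (δ/(2*|c|)) (1/(2*|c|)); gcongr
      _ = 1/2 := by
            field_simp
    set lam := -(θ * c) with hlamdef
    set m := min (δ/2) (θ*c^2/4) with hmdef
    have hc2 : 0 < c^2 := by rw [← sq_abs]; exact pow_pos hcabs 2
    have hmpos : 0 < m := lt_min (half_pos hδpos) (div_pos (mul_pos hθpos hc2) (by norm_num))
    have hm1 : m ≤ δ/2 := min_le_left _ _
    have hbound : ‖T + lam • A‖ ≤ 1 - m := by
      apply ContinuousLinearMap.opNorm_le_of_unit_norm
      · linarith
      intro x hx
      have happ : (T + lam • A) x = T x + (lam * g x) • T x₀ := by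
        rw [ContinuousLinearMap.add_apply, ContinuousLinearMap.smul_apply, hAapp, smul_smul]
      rw [happ]
      have hTux : ‖T x‖ ≤ 1 := by
        have := T.le_opNorm x; rwa [hT, hx, one_mul] at this
      have hgux : |g x| ≤ 1 := by
        have := g.le_opNorm x; rwa [hg1, hx, one_mul] at this
      by_cases hcase : ‖T x‖ < 1 - δ
      · have : ‖T x + (lam * g x) • T x₀‖ ≤ ‖T x‖ + |lam * g x| * ‖T x₀‖ := by
          refine le_trans (norm_add_le _ _) ?_
          rw [norm_smul]; rfl
        have hlg : |lam * g x| ≤ θ * |c| := by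
          rw [abs_mul, hlamdef, abs_neg, abs_mul, abs_of_pos hθpos]
          calc θ * |c| * |g x| ≤ θ * |c| * 1 := by gcongr
          _ = θ * |c| := mul_one _
        rw [hTx₀] at this
        have : ‖T x + (lam * g x) • T x₀‖ ≤ (1 - δ) + θ * |c| := by
          refine le_trans this ?_
          have := le_of_lt hcase
          linarith
        linarith
      · push_neg at hcase
        have hδ₀x : 1 - δ₀ ≤ ‖T x‖ := by
          have : δ ≤ δ₀ := min_le_left _ _
          linarith
        have main : ∀ s : ℝ, s * s = 1 → |s| = 1 →
            ‖T x - s • T x₀‖ ≤ |c|/4 → |g x - s * c| ≤ |c|/4 →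
            ‖T x + (lam * g x) • T x₀‖ ≤ 1 - θ*c^2/4 := by
          intro s hss habs hA1 hA2
          have hsgu : |s * g x - c| ≤ |c|/4 := by
            have h0 : s * (g x - s * c) = s * g x - c := by
              rw [mul_sub, ← mul_assoc, hss, one_mul]
            rw [← h0, abs_mul, habs, one_mul]
            exact hA2
          have hcsgu : c^2 - c^2/4 ≤ c * (s * g x) := by
            have h1 : c * (s * g x) - c^2 = c * (s * g x - c) := by ring
            have h2 : |c * (s * g x - c)| ≤ |c| * (|c|/4) := by
              rw [abs_mul]; gcongr
            have h3 : |c| * (|c|/4) = c^2/4 := by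
              rw [← sq_abs]; ring
            rw [h3] at h2
            have h4 := neg_abs_le (c * (s * g x - c))
            linarith
          have hlsg : lam * g x * s = -(θ * (c * (s * g x))) := by
            rw [hlamdef]; ring
          have hup : lam * g x * s ≤ -(θ * c^2/2) := by
            rw [hlsg]
            have h5 : c^2/2 ≤ c * (s * g x) := by
              have := sq_nonneg c
              linarith
            have h6 : θ * (c^2/2) ≤ θ * (c * (s * g x)) := by gcongr
            linarith
          have hlowb : -(1/2) ≤ lam * g x * s := by
            have habs2 : |lam * g x * s| ≤ θ * |c| := by
              rw [abs_mul, abs_mul, habs, mul_one, hlamdef, abs_neg, abs_mul,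
                abs_of_pos hθpos]
              calc θ * |c| * |g x| ≤ θ * |c| * 1 := by gcongr
              _ = θ * |c| := mul_one _
            have := neg_abs_le (lam * g x * s)
            linarith
          have hdecomp : T x + (lam * g x) • T x₀
              = (1 + lam * g x * s) • T x + (lam * g x) • (T x₀ - s • T x) := by
            module
          have hswap : ‖T x₀ - s • T x‖ ≤ |c|/4 := by
            have : T x₀ - s • T x = -(s • (T x - s • T x₀)) := by
              rw [smul_sub, smul_smul, hss, one_smul]; abel
            rw [this, norm_neg, norm_smul, Real.norm_eq_abs, habs, one_mul]
            exact hA1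
          calc ‖T x + (lam * g x) • T x₀‖
              ≤ ‖(1 + lam * g x * s) • T x‖ + ‖(lam * g x) • (T x₀ - s • T x)‖ := by
                rw [hdecomp]; exact norm_add_le _ _
          _ = |1 + lam * g x * s| * ‖T x‖ + |lam * g x| * ‖T x₀ - s • T x‖ := by
                rw [norm_smul, norm_smul, Real.norm_eq_abs, Real.norm_eq_abs]
          _ ≤ (1 + lam * g x * s) * 1 + (θ * |c|) * (|c|/4) := by
                have h1 : |1 + lam * g x * s| = 1 + lam * g x * s := by
                  rw [abs_of_nonneg]; linarith
                have h2 : |lam * g x| ≤ θ * |c| := by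
                  rw [abs_mul, hlamdef, abs_neg, abs_mul, abs_of_pos hθpos]
                  calc θ * |c| * |g x| ≤ θ * |c| * 1 := by gcongr
                  _ = θ * |c| := mul_one _
                rw [h1]
                have hTxnn : (0:ℝ) ≤ 1 + lam * g x * s := by linarith
                gcongr
          _ = 1 + lam * g x * s + θ * (|c| * |c|)/4 := by ring
          _ ≤ 1 - θ * c^2/2 + θ * c^2/4 := by
                have h7 : |c| * |c| = c^2 := by rw [← sq_abs]; ring
                rw [h7]; linarith
          _ = 1 - θ*c^2/4 := by ring
        have hfin : ‖T x + (lam * g x) • T x₀‖ ≤ 1 - θ*c^2/4 := by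
          rcases hkey x (le_of_eq hx) hδ₀x with ⟨hA1, hA2⟩ | ⟨hA1, hA2⟩
          · exact main 1 (by norm_num) (by norm_num) (by simpa using hA1) (by simpa using hA2)
          · refine main (-1) (by norm_num) (by norm_num) ?_ ?_
            · rw [neg_smul, one_smul, sub_neg_eq_add]; exact hA1
            · rw [neg_one_mul, sub_neg_eq_add]; exact hA2
        have : m ≤ θ*c^2/4 := min_le_right _ _
        linarith
    have := hB lam
    rw [hT] at this
    linarith
end

section
/- Let X and Y be real normed linear spaces, T a bounded linear operator from X to Y with operator norm 1, and x₀ a unit vector with x₀ ∈ M_T. Suppose T is left orthogonality preserving at x₀. If Tx₀ is a smooth point of Y, then x₀ is a smooth point of X. -/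
/-- James: if `x ⊥_B y` and `x ≠ 0` then some norming functional of `x` kills `y`. -/
lemma james {E : Type*} [NormedAddCommGroup E] [NormedSpace ℝ E] {x y : E} (hx : x ≠ 0)
    (h : BJOrth x y) : ∃ f : E →L[ℝ] ℝ, ‖f‖ = 1 ∧ f x = ‖x‖ ∧ f y = 0 := by
  set S : Submodule ℝ E := ℝ ∙ y with hS
  haveI : IsClosed (S : Set E) := S.closed_of_finiteDimensional
  -- quotient norm of x equals ‖x‖
  have hmk : ∀ m : E, (Submodule.Quotient.mk m : E ⧸ S) = Submodule.Quotient.mk x → ‖x‖ ≤ ‖m‖ := by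
    intro m hm
    have : m - x ∈ S := (Submodule.Quotient.eq S).1 hm
    obtain ⟨c, hc⟩ := Submodule.mem_span_singleton.1 this
    have : m = x + c • y := by rw [hc]; abel
    rw [this]; exact h c
  have hnorm : ‖(Submodule.Quotient.mk x : E ⧸ S)‖ = ‖x‖ := by
    refine le_antisymm (Submodule.Quotient.norm_mk_le S x) ?_
    by_contra hlt
    push_neg at hlt
    obtain ⟨m, hm, hmlt⟩ := Submodule.Quotient.norm_mk_lt
      (Submodule.Quotient.mk x : E ⧸ S) (sub_pos.2 hlt)
    have := hmk m hm
    linarith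
  have hne : (Submodule.Quotient.mk x : E ⧸ S) ≠ 0 := by
    intro h0
    apply hx
    rw [← norm_eq_zero, ← hnorm, h0, norm_zero]
  obtain ⟨g, hg1, hg2⟩ := exists_dual_vector ℝ _ (norm_ne_zero_iff.2 hne)
  -- continuous quotient map
  let q : E →L[ℝ] E ⧸ S := LinearMap.mkContinuous S.mkQ 1 (fun m => by
    simpa using Submodule.Quotient.norm_mk_le S m)
  refine ⟨g.comp q, ?_, ?_, ?_⟩
  · refine le_antisymm ?_ ?_
    · refine (g.comp q).opNorm_le_bound zero_le_one (fun m => ?_)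
      calc ‖g (q m)‖ ≤ ‖g‖ * ‖q m‖ := g.le_opNorm _
        _ = ‖q m‖ := by rw [hg1, one_mul]
        _ ≤ ‖m‖ := Submodule.Quotient.norm_mk_le S m
        _ = 1 * ‖m‖ := (one_mul _).symm
    · have hx' : ‖x‖ ≠ 0 := norm_ne_zero_iff.2 hx
      have : ‖x‖ = ‖(g.comp q) x‖ := by
        simp [q, hg2, hnorm, abs_of_nonneg (norm_nonneg x)]
      have h2 := (g.comp q).le_opNorm x
      rw [← this] at h2
      have := (norm_nonneg x).lt_of_ne (Ne.symm hx')
      nlinarith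
  · simp [q, hg2, hnorm]
  · have : q y = 0 := by
      simp only [q, LinearMap.mkContinuous_apply, Submodule.mkQ_apply]
      rw [Submodule.Quotient.mk_eq_zero]
      exact Submodule.mem_span_singleton_self y
    simp [this]

/-- Converse: a norming functional vanishing at `y` gives orthogonality. -/
lemma bjOrth_of_functional {E : Type*} [NormedAddCommGroup E] [NormedSpace ℝ E]
    {x y : E} {f : E →L[ℝ] ℝ} (hf1 : ‖f‖ = 1) (hfx : f x = ‖x‖) (hfy : f y = 0) :
    BJOrth x y := by
  intro lam
  have : f (x + lam • y) = ‖x‖ := by simp [hfx, hfy]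
  calc ‖x‖ = ‖f (x + lam • y)‖ := by rw [this]; exact (abs_of_nonneg (norm_nonneg x)).symm
    _ ≤ ‖f‖ * ‖x + lam • y‖ := f.le_opNorm _
    _ = ‖x + lam • y‖ := by rw [hf1, one_mul]

/-- If `‖T‖ = 1`, `x₀ ∈ M_T` is a unit vector, `T` is left orthogonality
preserving at `x₀`, and `T x₀` is a smooth point, then `x₀` is a smooth point. -/
theorem smooth_of_image_smooth {X Y : Type*} [NormedAddCommGroup X] [NormedSpace ℝ X]
    [NormedAddCommGroup Y] [NormedSpace ℝ Y]
    (T : X →L[ℝ] Y) (hT : ‖T‖ = 1) (x₀ : X) (hx₀ : ‖x₀‖ = 1)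
    (hMT : ‖T x₀‖ = ‖T‖)
    (hop : LeftOPAt T x₀)
    (hsm : SmoothPoint (T x₀)) :
    SmoothPoint x₀ := by
  obtain ⟨g, ⟨hg1, hg2⟩, hgu⟩ := hsm
  have hTx : ‖T x₀‖ = 1 := by rw [hMT, hT]
  have hTx0 : T x₀ ≠ 0 := by intro h0; rw [h0, norm_zero] at hTx; linarith
  have hx0 : x₀ ≠ 0 := by intro h0; rw [h0, norm_zero] at hx₀; linarith
  -- key: any norming functional of x₀ equals g ∘ T
  have key : ∀ f : X →L[ℝ] ℝ, ‖f‖ = 1 → f x₀ = ‖x₀‖ → ∀ y : X, f y = g (T y) := by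
    intro f hf1 hfx y
    have hfx1 : f x₀ = 1 := by rw [hfx, hx₀]
    set z := y - f y • x₀ with hz
    have hfz : f z = 0 := by simp [hz, hfx1]
    have horth : BJOrth x₀ z := bjOrth_of_functional hf1 hfx hfz
    have hTorth : BJOrth (T x₀) (T z) := hop z horth
    obtain ⟨h, hh1, hh2, hh3⟩ := james hTx0 hTorth
    have : h = g := hgu h ⟨hh1, hh2⟩
    have hgz : g (T z) = 0 := by rw [← this]; exact hh3
    have hy : y = z + f y • x₀ := by simp [hz]
    calc f y = f y * 1 := (mul_one _).symm
      _ = g (T z) + f y * g (T x₀) := by rw [hgz, hg2, hTx]; ring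
      _ = g (T (z + f y • x₀)) := by simp [map_add, map_smul]
      _ = g (T y) := by rw [← hy]
  obtain ⟨F, hF1, hF2⟩ := exists_dual_vector ℝ x₀ (norm_ne_zero_iff.2 hx0)
  refine ⟨F, ⟨hF1, hF2⟩, fun f ⟨hf1, hf2⟩ => ?_⟩
  ext y
  rw [key f hf1 hf2 y, key F hF1 hF2 y]
end

section
/- Let X and Y be real normed linear spaces, T a bounded linear operator from X onto Y (T surjective) with operator norm 1, and x₀ a unit vector with x₀ ∈ M_T. Suppose T is left orthogonality preserving at x₀. If x₀ is a smooth point of X, then Tx₀ is a smooth point of Y. -/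
/-- If `‖T‖ = 1`, `T` is onto, `x₀ ∈ M_T` is a unit vector, `T` is left
orthogonality preserving at `x₀`, and `x₀` is a smooth point, then `T x₀` is a smooth point. -/
theorem image_smooth_of_smooth {X Y : Type*} [NormedAddCommGroup X] [NormedSpace ℝ X]
    [NormedAddCommGroup Y] [NormedSpace ℝ Y]
    (T : X →L[ℝ] Y) (hsurj : Function.Surjective T) (hT : ‖T‖ = 1)
    (x₀ : X) (hx₀ : ‖x₀‖ = 1) (hMT : ‖T x₀‖ = ‖T‖)
    (hop : LeftOPAt T x₀)
    (hsm : SmoothPoint x₀) :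
    SmoothPoint (T x₀) := by
  have hTx₀ : ‖T x₀‖ = 1 := hMT.trans hT
  have hne : T x₀ ≠ 0 := by
    intro h; rw [h, norm_zero] at hTx₀; exact one_ne_zero hTx₀.symm
  obtain ⟨g₀, hg₀⟩ := exists_dual_vector ℝ (T x₀) (norm_ne_zero_iff.mpr hne)
  -- key: any norming functional of T x₀ composed with T is a norming functional of x₀
  have key : ∀ g : Y →L[ℝ] ℝ, ‖g‖ = 1 → g (T x₀) = ‖T x₀‖ →
      ‖g.comp T‖ = 1 ∧ (g.comp T) x₀ = ‖x₀‖ := by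
    intro g hg hgx
    have hval : (g.comp T) x₀ = ‖x₀‖ := by
      simp [ContinuousLinearMap.comp_apply, hgx, hTx₀, hx₀]
    refine ⟨le_antisymm ?_ ?_, hval⟩
    · calc ‖g.comp T‖ ≤ ‖g‖ * ‖T‖ := g.opNorm_comp_le T
        _ = 1 := by rw [hg, hT, mul_one]
    · have := (g.comp T).le_opNorm x₀
      rw [hval, hx₀, mul_one] at this
      simpa using this
  obtain ⟨f, hf, hfu⟩ := hsm
  refine ⟨g₀, ⟨hg₀.1, hg₀.2⟩, ?_⟩
  intro g ⟨hg1, hg2⟩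
  have h1 := key g hg1 hg2
  have h2 := key g₀ hg₀.1 hg₀.2
  have heq : g.comp T = g₀.comp T := (hfu _ h1).trans (hfu _ h2).symm
  ext y
  obtain ⟨x, rfl⟩ := hsurj y
  exact congrFun (congrArg DFunLike.coe heq) x
end

section
/- Let X be a reflexive real Banach space, Y a real normed linear space, and T a compact linear operator from X to Y with operator norm 1 such that M_T = {x₀, −x₀} for some unit vector x₀ ∈ X. Suppose T is left orthogonality preserving at x₀. If T is a right-symmetric point of the space of compact operators from X to Y (with the operator norm), then x₀ is a left-symmetric point of X. -/
open Filter Metric NormedSpace Topology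

section AuxLemmas

lemma aux_convex_norm {E : Type*} [NormedAddCommGroup E] [NormedSpace ℝ E]
    (a b : E) {s t : ℝ} (hs : 0 < s) (hst : s ≤ t) :
    ‖a‖ + (t / s) * (‖a + s • b‖ - ‖a‖) ≤ ‖a + t • b‖ := by
  have ht : 0 < t := hs.trans_le hst
  have hq0 : 0 ≤ s / t := by positivity
  have hq1 : s / t ≤ 1 := by rw [div_le_one ht]; exact hst
  have key : a + s • b = (1 - s / t) • a + (s / t) • (a + t • b) := by
    match_scalars <;> field_simp <;> ring
  have h1 : ‖a + s • b‖ ≤ (1 - s / t) * ‖a‖ + (s / t) * ‖a + t • b‖ := by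
    rw [key]
    refine (norm_add_le _ _).trans ?_
    rw [norm_smul, norm_smul, Real.norm_of_nonneg (by linarith), Real.norm_of_nonneg hq0]
  have hr : 0 < t / s := div_pos ht hs
  have h2 := mul_le_mul_of_nonneg_left h1 hr.le
  have h3 : t / s * ((1 - s / t) * ‖a‖ + s / t * ‖a + t • b‖) =
      t / s * ‖a‖ - ‖a‖ + ‖a + t • b‖ := by
    field_simp
  rw [h3] at h2
  nlinarith [h2]

lemma aux_cluster_const {c r : ℝ} {a : ℕ → ℝ} (h : MapClusterPt c atTop a)
    (ha : ∀ n, a n = r) : c = r := by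
  have h1 : Filter.map a atTop ≤ 𝓝 r := by
    have h2 : a = fun _ => r := funext ha
    rw [h2]
    exact tendsto_const_nhds
  exact eq_of_nhds_neBot (ClusterPt.mono h h1)

lemma aux_cluster_ge {c b : ℝ} {a : ℕ → ℝ} (h : MapClusterPt c atTop a)
    (ha : ∀ᶠ n in atTop, b ≤ a n) : b ≤ c := by
  have h1 : Filter.map a atTop ≤ 𝓟 (Set.Ici b) := by
    rw [Filter.le_principal_iff, Filter.mem_map]
    exact ha
  have h2 : ClusterPt c (𝓟 (Set.Ici b)) := ClusterPt.mono h h1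
  have h3 : c ∈ closure (Set.Ici b) := mem_closure_iff_clusterPt.mpr h2
  rwa [IsClosed.closure_eq isClosed_Ici] at h3

end AuxLemmas

set_option maxHeartbeats 1000000 in
lemma aux_key {X Y : Type*}
    [NormedAddCommGroup X] [NormedSpace ℝ X]
    [NormedAddCommGroup Y] [NormedSpace ℝ Y]
    (hX : ReflexiveSpace X)
    (T A : X →L[ℝ] Y) (hTc : IsCompactOperator T) (hAc : IsCompactOperator A)
    (hT : ‖T‖ = 1) (x₀ : X)
    (hMT : {x : X | ‖x‖ = 1 ∧ ‖T x‖ = ‖T‖} = {x₀, -x₀})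
    (horth : ∀ lam : ℝ, (1 : ℝ) ≤ ‖T + lam • A‖)
    {lam₀ : ℝ} (hlam : 0 < lam₀) :
    1 ≤ ‖T x₀ + lam₀ • A x₀‖ := by
  -- Step 1: a sequence of near-norming unit vectors for `T + (lam₀/(n+1)) • A`.
  have hseq : ∀ n : ℕ, ∃ x : X, ‖x‖ = 1 ∧
      1 - 1 / ((n : ℝ) + 1) ^ 2 < ‖T x + (lam₀ / ((n : ℝ) + 1)) • A x‖ := by
    intro n
    set N : ℝ := (n : ℝ) + 1 with hN
    clear_value N
    have hN0 : 0 < N := by rw [hN]; positivity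
    have hN1 : (1 : ℝ) ≤ N := by
      rw [hN]; have : (0:ℝ) ≤ (n:ℝ) := Nat.cast_nonneg n; linarith
    set S : X →L[ℝ] Y := T + (lam₀ / N) • A with hS
    have hpos : (0:ℝ) < 1 / N ^ 2 := by positivity
    have h1 : 1 - 1 / N ^ 2 < ‖S‖ := by
      have h2 := horth (lam₀ / N)
      linarith
    obtain ⟨z, hz1, hz2⟩ := S.exists_lt_apply_of_lt_opNorm h1
    have hrnn : (0:ℝ) ≤ 1 - 1 / N ^ 2 := by
      have h3 : 1 / N ^ 2 ≤ 1 := by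
        rw [div_le_one (by positivity)]
        nlinarith
      linarith
    have hz0 : z ≠ 0 := by
      intro h
      rw [h] at hz2
      simp only [map_zero, norm_zero] at hz2
      linarith
    have hzn : 0 < ‖z‖ := norm_pos_iff.mpr hz0
    refine ⟨‖z‖⁻¹ • z, ?_, ?_⟩
    · rw [norm_smul, norm_inv, norm_norm, inv_mul_cancel₀ hzn.ne']
    · have hcomp : T (‖z‖⁻¹ • z) + (lam₀ / N) • A (‖z‖⁻¹ • z) = ‖z‖⁻¹ • S z := by
        rw [hS]
        simp only [ContinuousLinearMap.add_apply, ContinuousLinearMap.coe_smul',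
          Pi.smul_apply, map_smul, smul_add]
        rw [smul_comm]
      rw [hcomp, norm_smul, norm_inv, norm_norm]
      have hinv : (1:ℝ) ≤ ‖z‖⁻¹ := one_le_inv_iff₀.mpr ⟨hzn, hz1.le⟩
      have h4 : ‖S z‖ ≤ ‖z‖⁻¹ * ‖S z‖ := le_mul_of_one_le_left (norm_nonneg _) hinv
      linarith
  choose x hx1 hx2 using hseq
  -- Step 2: compact sets containing the images of the unit ball.
  obtain ⟨KT, hKTc, hKTsub⟩ :=
    (show IsCompactOperator ⇑(T.toLinearMap) from hTc).image_subset_compact_of_bounded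
      (Metric.isBounded_closedBall (x := (0:X)) (r := 1))
  obtain ⟨KA, hKAc, hKAsub⟩ :=
    (show IsCompactOperator ⇑(A.toLinearMap) from hAc).image_subset_compact_of_bounded
      (Metric.isBounded_closedBall (x := (0:X)) (r := 1))
  set J : X →L[ℝ] StrongDual ℝ (StrongDual ℝ X) :=
    NormedSpace.inclusionInDoubleDual ℝ X with hJ
  set u : ℕ → WeakDual ℝ (StrongDual ℝ X) × Y × Y :=
    fun n => (StrongDual.toWeakDual (J (x n)), T (x n), A (x n)) with hu
  set SB : Set (WeakDual ℝ (StrongDual ℝ X)) :=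
    WeakDual.toStrongDual ⁻¹' Metric.closedBall 0 1 with hSB
  have hScomp : IsCompact (SB ×ˢ (KT ×ˢ KA)) :=
    (WeakDual.isCompact_closedBall (𝕜 := ℝ) (E := StrongDual ℝ X) 0 1).prod (hKTc.prod hKAc)
  have hxball : ∀ n, x n ∈ Metric.closedBall (0:X) 1 := by
    intro n
    rw [mem_closedBall_zero_iff, hx1 n]
  have hmem : ∀ n, u n ∈ SB ×ˢ (KT ×ˢ KA) := by
    intro n
    refine ⟨?_, hKTsub ⟨x n, hxball n, rfl⟩, hKAsub ⟨x n, hxball n, rfl⟩⟩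
    show WeakDual.toStrongDual (StrongDual.toWeakDual (J (x n))) ∈ Metric.closedBall 0 1
    rw [mem_closedBall_zero_iff (E := StrongDual ℝ (StrongDual ℝ X))]
    have h5 : WeakDual.toStrongDual (StrongDual.toWeakDual (J (x n))) = J (x n) :=
      StrongDual.toWeakDual.symm_apply_apply _
    rw [h5]
    have h6 : ‖J (x n)‖ ≤ ‖x n‖ := NormedSpace.double_dual_bound ℝ X (x n)
    rw [hx1 n] at h6
    exact h6
  have hle : Filter.map u atTop ≤ Filter.principal (SB ×ˢ (KT ×ˢ KA)) := by
    rw [Filter.le_principal_iff, Filter.mem_map]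
    exact Filter.univ_mem' hmem
  obtain ⟨p, hpS, hp⟩ := hScomp.exists_mapClusterPt (u := u) hle
  obtain ⟨Φ, uT, uA⟩ := p
  obtain ⟨xx, hxx⟩ := hX (WeakDual.toStrongDual Φ)
  have hpS1 : ‖WeakDual.toStrongDual Φ‖ ≤ 1 :=
    (mem_closedBall_zero_iff (E := StrongDual ℝ (StrongDual ℝ X))).mp hpS.1
  have hxxle : ‖xx‖ ≤ 1 := by
    refine NormedSpace.norm_le_dual_bound ℝ xx zero_le_one fun f => ?_
    have h7 : f xx = (WeakDual.toStrongDual Φ) f := by rw [← hxx]; rfl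
    rw [h7, one_mul]
    calc ‖(WeakDual.toStrongDual Φ) f‖ ≤ ‖WeakDual.toStrongDual Φ‖ * ‖f‖ :=
          ContinuousLinearMap.le_opNorm _ _
      _ ≤ 1 * ‖f‖ := mul_le_mul_of_nonneg_right hpS1 (norm_nonneg f)
      _ = ‖f‖ := one_mul _
  have hcl : ∀ F : WeakDual ℝ (StrongDual ℝ X) × Y × Y → ℝ, Continuous F →
      MapClusterPt (F (Φ, uT, uA)) atTop (F ∘ u) :=
    fun F hF => hp.continuousAt_comp hF.continuousAt
  -- identify the second coordinate of the cluster point with `T xx`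
  have hTeq : T xx = uT := by
    refine (NormedSpace.eq_iff_forall_dual_eq ℝ).mpr fun ψ => ?_
    have hF : Continuous fun q : WeakDual ℝ (StrongDual ℝ X) × Y × Y =>
        q.1 (ψ.comp T) - ψ q.2.1 :=
      ((WeakDual.eval_continuous (ψ.comp T)).comp continuous_fst).sub
        (ψ.continuous.comp (continuous_fst.comp continuous_snd))
    have h0 := hcl _ hF
    have hz := aux_cluster_const h0 (r := 0) (fun n => by
      show (StrongDual.toWeakDual (J (x n))) (ψ.comp T) - ψ (T (x n)) = 0
      have h8 : (StrongDual.toWeakDual (J (x n))) (ψ.comp T) = ψ (T (x n)) := rfl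
      rw [h8, sub_self])
    have h9 : Φ (ψ.comp T) = ψ (T xx) := by
      have h10 : (WeakDual.toStrongDual Φ) (ψ.comp T) = ψ (T xx) := by rw [← hxx]; rfl
      exact h10
    simp only at hz
    linarith [hz, h9]
  have hAeq : A xx = uA := by
    refine (NormedSpace.eq_iff_forall_dual_eq ℝ).mpr fun ψ => ?_
    have hF : Continuous fun q : WeakDual ℝ (StrongDual ℝ X) × Y × Y =>
        q.1 (ψ.comp A) - ψ q.2.2 :=
      ((WeakDual.eval_continuous (ψ.comp A)).comp continuous_fst).sub
        (ψ.continuous.comp (continuous_snd.comp continuous_snd))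
    have h0 := hcl _ hF
    have hz := aux_cluster_const h0 (r := 0) (fun n => by
      show (StrongDual.toWeakDual (J (x n))) (ψ.comp A) - ψ (A (x n)) = 0
      have h8 : (StrongDual.toWeakDual (J (x n))) (ψ.comp A) = ψ (A (x n)) := rfl
      rw [h8, sub_self])
    have h9 : Φ (ψ.comp A) = ψ (A xx) := by
      have h10 : (WeakDual.toStrongDual Φ) (ψ.comp A) = ψ (A xx) := by rw [← hxx]; rfl
      exact h10
    simp only at hz
    linarith [hz, h9]
  -- the cluster point has norm at least one in the `T` coordinate
  have hTcl := hcl (fun q => ‖q.2.1‖) (continuous_norm.comp (continuous_fst.comp continuous_snd))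
  have htend : Tendsto (fun n : ℕ => 1 / ((n:ℝ)+1)) atTop (𝓝 0) :=
    tendsto_one_div_add_atTop_nhds_zero_nat
  have hb : ∀ ε : ℝ, 0 < ε → 1 - ε ≤ ‖uT‖ := by
    intro ε hε
    refine aux_cluster_ge hTcl ?_
    have htend2 : Tendsto
        (fun n : ℕ => 1/((n:ℝ)+1) * (1/((n:ℝ)+1)) + lam₀ * ‖A‖ * (1/((n:ℝ)+1)))
        atTop (𝓝 (0 * 0 + lam₀ * ‖A‖ * 0)) := (htend.mul htend).add (htend.const_mul _)
    simp only [mul_zero, zero_mul, add_zero, zero_add] at htend2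
    filter_upwards [htend2.eventually (gt_mem_nhds hε)] with n hn
    show 1 - ε ≤ ‖T (x n)‖
    set N : ℝ := (n : ℝ) + 1 with hN
    clear_value N
    have hN0 : 0 < N := by rw [hN]; positivity
    have h11 : 1/N^2 = 1/N * (1/N) := by
      rw [div_mul_div_comm, one_mul, ← pow_two]
    have h12 := hx2 n
    have h13 : ‖T (x n) + (lam₀ / N) • A (x n)‖ ≤ ‖T (x n)‖ + (lam₀ / N) * ‖A‖ := by
      refine (norm_add_le _ _).trans ?_
      have h14 : ‖(lam₀ / N) • A (x n)‖ ≤ (lam₀ / N) * ‖A‖ := by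
        rw [norm_smul, Real.norm_of_nonneg (by positivity)]
        have h15 : ‖A (x n)‖ ≤ ‖A‖ := by
          have := A.le_opNorm (x n); rwa [hx1 n, mul_one] at this
        exact mul_le_mul_of_nonneg_left h15 (by positivity)
      linarith
    have h16 : lam₀ / N = lam₀ * (1/N) := by ring
    rw [← hN] at h12
    rw [h11] at h12
    have h16' : lam₀ / N * ‖A‖ = lam₀ * ‖A‖ * (1/N) := by ring
    linarith [hn, h12, h13]
  have h1uT : 1 ≤ ‖uT‖ := by
    by_contra hcon
    push_neg at hcon
    have := hb ((1 - ‖uT‖)/2) (by linarith)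
    linarith
  -- hence `xx` is a unit vector at which `T` attains its norm
  have hTxx1 : 1 ≤ ‖T xx‖ := by rw [hTeq]; exact h1uT
  have hTxxle : ‖T xx‖ ≤ ‖xx‖ := by
    have := T.le_opNorm xx; rwa [hT, one_mul] at this
  have hxxnorm : ‖xx‖ = 1 := le_antisymm hxxle (le_trans hTxx1 hTxxle)
  have hTxxnorm : ‖T xx‖ = 1 := le_antisymm (hxxnorm ▸ hTxxle) hTxx1
  have hmem2 : xx ∈ ({x₀, -x₀} : Set X) := by
    rw [← hMT]
    exact ⟨hxxnorm, by rw [hTxxnorm, hT]⟩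
  -- the final cluster estimate
  have hfin := hcl (fun q => ‖q.2.1 + lam₀ • q.2.2‖)
    (((continuous_fst.comp continuous_snd).add
      ((continuous_snd.comp continuous_snd).const_smul lam₀)).norm)
  have hfb : 1 ≤ ‖uT + lam₀ • uA‖ := by
    have hball : ∀ ε : ℝ, 0 < ε → 1 - ε ≤ ‖uT + lam₀ • uA‖ := by
      intro ε hε
      refine aux_cluster_ge hfin ?_
      filter_upwards [htend.eventually (gt_mem_nhds hε)] with n hn
      show 1 - ε ≤ ‖T (x n) + lam₀ • A (x n)‖
      set N : ℝ := (n : ℝ) + 1 with hN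
      clear_value N
      have hN0 : 0 < N := by rw [hN]; positivity
      have hN1 : (1 : ℝ) ≤ N := by
        rw [hN]; have : (0:ℝ) ≤ (n:ℝ) := Nat.cast_nonneg n; linarith
      have hts : lam₀ / (lam₀ / N) = N := by
        field_simp
      have hcv := aux_convex_norm (T (x n)) (A (x n)) (s := lam₀ / N) (t := lam₀)
        (div_pos hlam hN0) (div_le_self hlam.le hN1)
      rw [hts] at hcv
      have h12 := hx2 n
      rw [← hN] at h12
      have ha1 : ‖T (x n)‖ ≤ 1 := by
        have := T.le_opNorm (x n); rwa [hT, hx1 n, one_mul] at this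
      have h17 : N * (1 - 1/N^2) ≤ N * ‖T (x n) + (lam₀ / N) • A (x n)‖ :=
        mul_le_mul_of_nonneg_left h12.le hN0.le
      have h18 : N * (1/N^2) = 1/N := by
        field_simp
      have h19 : 1/N < ε := hn
      have h21 : 0 ≤ N - N * ‖T (x n)‖ - 1 + ‖T (x n)‖ := by nlinarith [hN1, ha1]
      have e1 : N * (1 - 1/N^2) = N - 1/N := by rw [mul_sub, h18, mul_one]
      rw [e1] at h17
      rw [mul_sub] at hcv
      linarith [hcv, h17, h21, h19]
    by_contra hcon
    push_neg at hcon
    have := hball ((1 - ‖uT + lam₀ • uA‖)/2) (by linarith)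
    linarith
  have hfb2 : 1 ≤ ‖T xx + lam₀ • A xx‖ := by rw [hTeq, hAeq]; exact hfb
  simp only [Set.mem_insert_iff, Set.mem_singleton_iff] at hmem2
  rcases hmem2 with h | h
  · rwa [h] at hfb2
  · rw [h] at hfb2
    have h20 : T (-x₀) + lam₀ • A (-x₀) = -(T x₀ + lam₀ • A x₀) := by
      rw [map_neg, map_neg, smul_neg, neg_add]
    rwa [h20, norm_neg] at hfb2

set_option maxHeartbeats 1000000 in
/-- Let `T` be a norm-one compact operator from a reflexive Banach space `X` to a
normed space `Y` with `M_T = {x₀, -x₀}`, left orthogonality preserving at `x₀`. If `T` is a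
right-symmetric point of the space of compact operators, then `x₀` is left-symmetric. -/
theorem leftSymmetric_of_rightSymmetric {X Y : Type*}
    [NormedAddCommGroup X] [NormedSpace ℝ X] [CompleteSpace X]
    [NormedAddCommGroup Y] [NormedSpace ℝ Y]
    (hX : ReflexiveSpace X)
    (T : X →L[ℝ] Y) (hTc : IsCompactOperator T) (hT : ‖T‖ = 1)
    (x₀ : X) (hx₀ : ‖x₀‖ = 1)
    (hMT : {x : X | ‖x‖ = 1 ∧ ‖T x‖ = ‖T‖} = {x₀, -x₀})
    (hop : LeftOPAt T x₀)
    (hrs : RightSymmetricCompactOp T) :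
    LeftSymmetricPt x₀ := by
  intro y hxy
  by_cases hy : y = 0
  · subst hy
    intro lam
    simp
  obtain ⟨g, hg1, hg2⟩ := exists_dual_vector ℝ y (norm_ne_zero_iff.mpr hy)
  have hg2' : g y = ‖y‖ := by exact_mod_cast hg2
  have hx₀M : x₀ ∈ {x : X | ‖x‖ = 1 ∧ ‖T x‖ = ‖T‖} := by
    rw [hMT]; exact Set.mem_insert _ _
  have hTx₀ : ‖T x₀‖ = 1 := hx₀M.2.trans hT
  set A : X →L[ℝ] Y := g.smulRight (T x₀) with hA
  have hAc : IsCompactOperator A := by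
    have hgc : IsCompactOperator ⇑g := by
      refine ⟨Metric.closedBall 0 ‖g‖, isCompact_closedBall _ _, ?_⟩
      refine Filter.mem_of_superset (Metric.ball_mem_nhds 0 one_pos) fun z hz => ?_
      rw [Set.mem_preimage, mem_closedBall_zero_iff]
      have h1 := g.le_opNorm z
      have h2 : ‖z‖ ≤ 1 := (mem_ball_zero_iff.mp hz).le
      nlinarith [norm_nonneg g]
    have h3 : IsCompactOperator ((fun r : ℝ => r • T x₀) ∘ ⇑g) :=
      hgc.continuous_comp (continuous_id.smul continuous_const)
    have h4 : ⇑A = (fun r : ℝ => r • T x₀) ∘ ⇑g := rfl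
    rw [show IsCompactOperator ⇑A ↔ True from iff_of_true (h4 ▸ h3) trivial]
    trivial
  have hyn : (0:ℝ) < ‖y‖ := norm_pos_iff.mpr hy
  have hAT : BJOrth A T := by
    intro mu
    have hAnorm : ‖A‖ = 1 := by
      rw [hA, ContinuousLinearMap.norm_smulRight_apply, hg1, hTx₀, one_mul]
    rw [hAnorm]
    have hTy := hop y hxy
    have hval : (A + mu • T) (‖y‖⁻¹ • y) = T x₀ + (mu * ‖y‖⁻¹) • T y := by
      simp only [ContinuousLinearMap.add_apply, ContinuousLinearMap.coe_smul',
        Pi.smul_apply, map_smul, hA, ContinuousLinearMap.smulRight_apply]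
      rw [hg2']
      match_scalars <;> field_simp <;> ring
    have hstep : ‖T x₀ + (mu * ‖y‖⁻¹) • T y‖ ≤ ‖A + mu • T‖ := by
      rw [← hval]
      calc ‖(A + mu • T) (‖y‖⁻¹ • y)‖ ≤ ‖A + mu • T‖ * ‖‖y‖⁻¹ • y‖ :=
            ContinuousLinearMap.le_opNorm _ _
        _ = ‖A + mu • T‖ := by
            rw [norm_smul, norm_inv, norm_norm, inv_mul_cancel₀ hyn.ne', mul_one]
    calc (1:ℝ) = ‖T x₀‖ := hTx₀.symm
      _ ≤ ‖T x₀ + (mu * ‖y‖⁻¹) • T y‖ := hTy _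
      _ ≤ ‖A + mu • T‖ := hstep
  have hTA : BJOrth T A := hrs A hAc hAT
  have horth' : ∀ lam : ℝ, (1:ℝ) ≤ ‖T + lam • A‖ := fun lam => by
    have := hTA lam; rwa [hT] at this
  have hkey : ∀ lam : ℝ, (1:ℝ) ≤ ‖T x₀ + lam • A x₀‖ := by
    intro lam
    rcases lt_trichotomy lam 0 with h | h | h
    · have hAc' : IsCompactOperator (-A : X →L[ℝ] Y) := by
        have h5 : ⇑(-A : X →L[ℝ] Y) = -⇑A := rfl
        rw [show IsCompactOperator ⇑(-A : X →L[ℝ] Y) ↔ True from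
          iff_of_true (h5 ▸ hAc.neg) trivial]
        trivial
      have horth'' : ∀ mu : ℝ, (1:ℝ) ≤ ‖T + mu • (-A : X →L[ℝ] Y)‖ := fun mu => by
        have h6 : mu • (-A : X →L[ℝ] Y) = (-mu) • A := by rw [smul_neg, neg_smul]
        rw [h6]; exact horth' (-mu)
      have h7 := aux_key hX T (-A) hTc hAc' hT x₀ hMT horth'' (neg_pos.mpr h)
      have h8 : T x₀ + (-lam) • (-A : X →L[ℝ] Y) x₀ = T x₀ + lam • A x₀ := by
        simp [neg_smul, smul_neg]
      rwa [h8] at h7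
    · rw [h, zero_smul, add_zero, hTx₀]
    · exact aux_key hX T A hTc hAc hT x₀ hMT horth' h
  have hgx₀ : g x₀ = 0 := by
    by_contra hne
    have h9 := hkey (-(g x₀)⁻¹)
    have h10 : A x₀ = g x₀ • T x₀ := rfl
    rw [h10, smul_smul, neg_mul, inv_mul_cancel₀ hne, neg_smul, one_smul,
      add_neg_cancel, norm_zero] at h9
    linarith
  intro lam
  calc ‖y‖ = g y := hg2'.symm
    _ = g (y + lam • x₀) := by
        rw [map_add, map_smul, hgx₀, smul_eq_mul, mul_zero, add_zero]
    _ ≤ ‖g (y + lam • x₀)‖ := le_abs_self _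
    _ ≤ ‖g‖ * ‖y + lam • x₀‖ := g.le_opNorm _
    _ = ‖y + lam • x₀‖ := by rw [hg1, one_mul]
end

section
/- Let X be a reflexive real Banach space such that the unit sphere S_X contains no left-symmetric points. Let Y be a real normed linear space and T a compact linear operator from X to Y with operator norm 1 such that M_T = {x₀, −x₀} for some unit vector x₀ ∈ X. If T is left orthogonality preserving at x₀, then T is not a right-symmetric point of the space of compact operators from X to Y (with the operator norm). -/
open Filter Metric NormedSpace Topology

section Aux

variable {X Y : Type*} [NormedAddCommGroup X] [NormedSpace ℝ X]
  [NormedAddCommGroup Y] [NormedSpace ℝ Y]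

/-- Near-optimal points for the operator norm. -/
lemma aux_exists_near (S : X →L[ℝ] Y) {δ : ℝ} (hδ : 0 < δ) :
    ∃ z : X, ‖z‖ ≤ 1 ∧ ‖S‖ - δ ≤ ‖S z‖ := by
  by_contra hcon
  push_neg at hcon
  have h0 : ‖S 0‖ < ‖S‖ - δ := hcon 0 (by simp)
  have hpos : 0 < ‖S‖ - δ := by
    simpa using lt_of_le_of_lt (norm_nonneg (S 0)) h0
  have hb : ‖S‖ ≤ ‖S‖ - δ := by
    refine S.opNorm_le_bound hpos.le ?_
    intro x
    rcases eq_or_ne x 0 with rfl | hx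
    · simp
    · have hxn : 0 < ‖x‖ := norm_pos_iff.mpr hx
      have h1 : ‖S (‖x‖⁻¹ • x)‖ < ‖S‖ - δ := by
        refine hcon _ ?_
        rw [norm_smul, Real.norm_of_nonneg (inv_nonneg.mpr hxn.le), inv_mul_cancel₀ hxn.ne']
      rw [map_smul, norm_smul, Real.norm_of_nonneg (inv_nonneg.mpr hxn.le)] at h1
      have h2 : ‖x‖⁻¹ * ‖S x‖ ≤ ‖S‖ - δ := h1.le
      calc ‖S x‖ = ‖x‖ * (‖x‖⁻¹ * ‖S x‖) := by field_simp
        _ ≤ ‖x‖ * (‖S‖ - δ) := by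
            exact mul_le_mul_of_nonneg_left h2 hxn.le
        _ = (‖S‖ - δ) * ‖x‖ := by ring
  linarith

lemma aux_neBot {α β : Type*} [TopologicalSpace β] {F : Filter α} {u : α → β} {x : β}
    (h : ClusterPt x (Filter.map u F)) : (F ⊓ Filter.comap u (𝓝 x)).NeBot := by
  rw [← Filter.map_neBot_iff u, Filter.push_pull]
  rw [inf_comm]
  exact h

/-- In a reflexive space, any sequence in the unit ball has a weak cluster point in the
unit ball, in the sense that some nontrivial refinement of the filter converges weakly. -/
lemma aux_weak_cluster (hX : ReflexiveSpace X) {u : ℕ → X} (hu : ∀ n, ‖u n‖ ≤ 1)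
    (F : Filter ℕ) [F.NeBot] :
    ∃ x : X, ‖x‖ ≤ 1 ∧
      (F ⊓ Filter.comap (fun n => toWeakSpace ℝ X (u n)) (𝓝 (toWeakSpace ℝ X x))).NeBot := by
  classical
  set J : X →L[ℝ] StrongDual ℝ (StrongDual ℝ X) := inclusionInDoubleDual ℝ X with hJdef
  have hJsurj : Function.Surjective J := hX
  have hJnorm : ∀ z : X, ‖J z‖ = ‖z‖ := fun z =>
    (NormedSpace.inclusionInDoubleDualLi ℝ (E := X)).norm_map z
  have hJinj : Function.Injective J := by
    intro a b hab
    have h1 : ‖a - b‖ = 0 := by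
      rw [← hJnorm, map_sub, hab, sub_self]; exact norm_zero (E := StrongDual ℝ (StrongDual ℝ X))
    rwa [norm_eq_zero, sub_eq_zero] at h1
  set v : ℕ → WeakDual ℝ (StrongDual ℝ X) :=
    fun n => StrongDual.toWeakDual (J (u n)) with hvdef
  have hScomp : IsCompact ((WeakDual.toStrongDual) ⁻¹'
      Metric.closedBall (0 : StrongDual ℝ (StrongDual ℝ X)) 1) :=
    WeakDual.isCompact_closedBall (𝕜 := ℝ) 0 1
  have hmap : Filter.map v F ≤ Filter.principal
      ((WeakDual.toStrongDual) ⁻¹' Metric.closedBall (0 : StrongDual ℝ (StrongDual ℝ X)) 1) := by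
    refine Filter.le_principal_iff.mpr (Filter.mem_map.mpr (Filter.univ_mem' fun n => ?_))
    simp only [Set.mem_preimage, mem_closedBall_zero_iff]
    refine (mem_closedBall_zero_iff (E := StrongDual ℝ (StrongDual ℝ X))).mpr ?_
    show ‖J (u n)‖ ≤ 1
    rw [hJnorm]
    exact hu n
  obtain ⟨ψ, hψmem, hψ⟩ := hScomp.exists_clusterPt hmap
  have hN : (F ⊓ Filter.comap v (𝓝 ψ)).NeBot := aux_neBot hψ
  obtain ⟨x, hx⟩ := hJsurj (WeakDual.toStrongDual ψ)
  refine ⟨x, ?_, ?_⟩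
  · rw [← hJnorm x, hx]
    exact (mem_closedBall_zero_iff (E := StrongDual ℝ (StrongDual ℝ X))).mp (hψmem : WeakDual.toStrongDual ψ ∈ Metric.closedBall 0 1)
  · set Ψ : WeakDual ℝ (StrongDual ℝ X) → WeakSpace ℝ X :=
      fun φ => toWeakSpace ℝ X (Function.surjInv hJsurj (WeakDual.toStrongDual φ)) with hΨdef
    have hΨcont : Continuous Ψ := by
      apply WeakBilin.continuous_of_continuous_eval
      intro h'
      have heq : (fun φ : WeakDual ℝ (StrongDual ℝ X) => ((topDualPairing ℝ X).flip (Ψ φ)) h')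
          = fun φ : WeakDual ℝ (StrongDual ℝ X) => φ h' := by
        funext φ
        show h' (Function.surjInv hJsurj (WeakDual.toStrongDual φ)) = φ h'
        have h3 : J (Function.surjInv hJsurj (WeakDual.toStrongDual φ))
            = WeakDual.toStrongDual φ := Function.surjInv_eq hJsurj _
        calc h' (Function.surjInv hJsurj (WeakDual.toStrongDual φ))
            = (J (Function.surjInv hJsurj (WeakDual.toStrongDual φ))) h' := rfl
          _ = (WeakDual.toStrongDual φ) h' := by rw [h3]
          _ = φ h' := rfl
      rw [heq]
      exact WeakDual.eval_continuous h'
    have hΨv : (fun n => Ψ (v n)) = fun n => toWeakSpace ℝ X (u n) := by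
      funext n
      show toWeakSpace ℝ X (Function.surjInv hJsurj (WeakDual.toStrongDual (v n))) = _
      congr 1
      apply hJinj
      rw [Function.surjInv_eq hJsurj]
      rfl
    have hΨψ : Ψ ψ = toWeakSpace ℝ X x := by
      show toWeakSpace ℝ X (Function.surjInv hJsurj (WeakDual.toStrongDual ψ)) = _
      congr 1
      apply hJinj
      rw [Function.surjInv_eq hJsurj, hx]
    have hle : Filter.comap v (𝓝 ψ) ≤
        Filter.comap (fun n => toWeakSpace ℝ X (u n)) (𝓝 (toWeakSpace ℝ X x)) := by
      have h1 : 𝓝 ψ ≤ Filter.comap Ψ (𝓝 (Ψ ψ)) :=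
        Filter.tendsto_iff_comap.mp (hΨcont.tendsto ψ)
      calc Filter.comap v (𝓝 ψ) ≤ Filter.comap v (Filter.comap Ψ (𝓝 (Ψ ψ))) :=
            Filter.comap_mono h1
        _ = Filter.comap (fun n => Ψ (v n)) (𝓝 (Ψ ψ)) := Filter.comap_comap
        _ = Filter.comap (fun n => toWeakSpace ℝ X (u n)) (𝓝 (toWeakSpace ℝ X x)) := by
            rw [hΨv, hΨψ]
    exact hN.mono (inf_le_inf_left F hle)

end Aux

section Key

variable {X Y : Type*} [NormedAddCommGroup X] [NormedSpace ℝ X]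
  [NormedAddCommGroup Y] [NormedSpace ℝ Y]

lemma key_step (hX : ReflexiveSpace X)
    (T A : X →L[ℝ] Y) (hTc : IsCompactOperator T) (hAc : IsCompactOperator A)
    (hT : ‖T‖ = 1) (x₀ : X)
    (hMT : {x : X | ‖x‖ = 1 ∧ ‖T x‖ = ‖T‖} = {x₀, -x₀})
    (h : ∀ lam : ℝ, 1 ≤ ‖T + lam • A‖) :
    ∀ l : ℝ, 0 < l → 1 ≤ ‖T x₀ + l • A x₀‖ := by
  classical
  have hsel : ∀ n : ℕ, ∃ z : X, ‖z‖ ≤ 1 ∧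
      ‖T + (1/(n+1:ℝ)) • A‖ - (1/(n+1:ℝ))^2 ≤ ‖(T + (1/(n+1:ℝ)) • A) z‖ :=
    fun n => aux_exists_near _ (by positivity)
  choose u hu1 hu2 using hsel
  obtain ⟨x, hx1, hL⟩ := aux_weak_cluster hX hu1 atTop
  set L : Filter ℕ :=
    atTop ⊓ Filter.comap (fun n => toWeakSpace ℝ X (u n)) (𝓝 (toWeakSpace ℝ X x)) with hLdef
  haveI : L.NeBot := hL
  -- norm-convergent refinements via compactness of T and A
  have hTc' : IsCompactOperator ⇑(T : X →ₗ[ℝ] Y) := by simpa using hTc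
  have hAc' : IsCompactOperator ⇑(A : X →ₗ[ℝ] Y) := by simpa using hAc
  obtain ⟨CT, hCTc, hCTs⟩ :=
    hTc'.image_subset_compact_of_bounded (isBounded_closedBall (x := (0:X)) (r := 1))
  obtain ⟨CA, hCAc, hCAs⟩ :=
    hAc'.image_subset_compact_of_bounded (isBounded_closedBall (x := (0:X)) (r := 1))
  have humem : ∀ n, u n ∈ closedBall (0:X) 1 := fun n => by
    simpa [mem_closedBall_zero_iff] using hu1 n
  have hmapT : Filter.map (fun n => T (u n)) L ≤ Filter.principal CT :=
    Filter.le_principal_iff.mpr (Filter.mem_map.mpr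
      (Filter.univ_mem' fun n => hCTs ⟨u n, humem n, rfl⟩))
  obtain ⟨w, hwmem, hwcl⟩ := hCTc.exists_clusterPt hmapT
  set L' : Filter ℕ := L ⊓ Filter.comap (fun n => T (u n)) (𝓝 w) with hL'def
  haveI : L'.NeBot := aux_neBot hwcl
  have hmapA : Filter.map (fun n => A (u n)) L' ≤ Filter.principal CA :=
    Filter.le_principal_iff.mpr (Filter.mem_map.mpr
      (Filter.univ_mem' fun n => hCAs ⟨u n, humem n, rfl⟩))
  obtain ⟨wA, hwAmem, hwAcl⟩ := hCAc.exists_clusterPt hmapA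
  set L'' : Filter ℕ := L' ⊓ Filter.comap (fun n => A (u n)) (𝓝 wA) with hL''def
  haveI : L''.NeBot := aux_neBot hwAcl
  have hle1 : L'' ≤ L' := inf_le_left
  have hle2 : L' ≤ L := inf_le_left
  have hleTop : L'' ≤ atTop := hle1.trans (hle2.trans inf_le_left)
  -- convergences along L''
  have hTu : Filter.Tendsto (fun n => T (u n)) L'' (𝓝 w) :=
    Filter.tendsto_iff_comap.mpr (hle1.trans inf_le_right)
  have hAu : Filter.Tendsto (fun n => A (u n)) L'' (𝓝 wA) :=
    Filter.tendsto_iff_comap.mpr inf_le_right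
  have hweak : ∀ g : StrongDual ℝ X, Filter.Tendsto (fun n => g (u n)) L'' (𝓝 (g x)) := by
    intro g
    have h0 : Filter.Tendsto (fun n => toWeakSpace ℝ X (u n)) L'' (𝓝 (toWeakSpace ℝ X x)) :=
      Filter.tendsto_iff_comap.mpr ((hle1.trans hle2).trans inf_le_right)
    exact ((WeakBilin.eval_continuous ((topDualPairing ℝ X).flip) g).tendsto _).comp h0
  -- identify the limits
  have hwT : w = T x := by
    rw [NormedSpace.eq_iff_forall_dual_eq (𝕜 := ℝ)]
    intro g
    refine tendsto_nhds_unique ((g.continuous.tendsto w).comp hTu) ?_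
    exact hweak (g.comp T)
  have hwA : wA = A x := by
    rw [NormedSpace.eq_iff_forall_dual_eq (𝕜 := ℝ)]
    intro g
    refine tendsto_nhds_unique ((g.continuous.tendsto wA).comp hAu) ?_
    exact hweak (g.comp A)
  rw [hwT] at hTu
  rw [hwA] at hAu
  -- limit facts
  have ht0 : Filter.Tendsto (fun n : ℕ => 1/(n+1:ℝ)) atTop (𝓝 0) :=
    tendsto_one_div_add_atTop_nhds_zero_nat
  have ht0' : Filter.Tendsto (fun n : ℕ => 1/(n+1:ℝ)) L'' (𝓝 0) := ht0.mono_left hleTop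
  have hAbd : Filter.Tendsto (fun n : ℕ => (1/(n+1:ℝ)) • A (u n)) L'' (𝓝 0) := by
    apply squeeze_zero_norm (a := fun n : ℕ => (1/(n+1:ℝ)) * ‖A‖)
    · intro n
      rw [norm_smul, Real.norm_of_nonneg (by positivity)]
      exact mul_le_mul_of_nonneg_left (A.unit_le_opNorm (u n) (hu1 n)) (by positivity)
    · simpa using ht0'.mul_const ‖A‖
  have hnormT : Filter.Tendsto (fun n : ℕ => ‖T (u n) + (1/(n+1:ℝ)) • A (u n)‖)
      L'' (𝓝 ‖T x‖) := by
    simpa using (hTu.add hAbd).norm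
  have h1lb : (1:ℝ) ≤ ‖T x‖ := by
    refine le_of_tendsto_of_tendsto (f := fun n : ℕ => 1 - (1/(n+1:ℝ))^2) ?_ hnormT ?_
    · have := (ht0'.mul ht0')
      have h2 : Filter.Tendsto (fun n : ℕ => 1 - (1/(n+1:ℝ))^2) L'' (𝓝 1) := by
        have h3 := tendsto_const_nhds (x := (1:ℝ)) (f := L'') |>.sub (ht0'.mul ht0')
        simpa [pow_two] using h3
      exact h2
    · refine Filter.Eventually.of_forall fun n => ?_
      have happ : (T + (1/(n+1:ℝ)) • A) (u n) = T (u n) + (1/(n+1:ℝ)) • A (u n) := by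
        simp
      have h4 := hu2 n
      rw [happ] at h4
      have h5 := h (1/(n+1:ℝ))
      linarith
  have hTxle : ‖T x‖ ≤ ‖x‖ := by
    have := T.le_opNorm x
    rwa [hT, one_mul] at this
  have hTx1 : ‖T x‖ = 1 := le_antisymm (hTxle.trans hx1) h1lb
  have hxn1 : ‖x‖ = 1 := le_antisymm hx1 (h1lb.trans hTxle)
  have hxmem : x = x₀ ∨ x = -x₀ := by
    have hmem : x ∈ ({x₀, -x₀} : Set X) := by
      rw [← hMT]
      exact ⟨hxn1, by rw [hT]; exact hTx1⟩
    simpa using hmem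
  -- the estimate for each positive l
  intro l hl
  have hkey : (1:ℝ) ≤ ‖T x + l • A x‖ := by
    have hnorm2 : Filter.Tendsto (fun n => ‖T (u n) + l • A (u n)‖) L''
        (𝓝 ‖T x + l • A x‖) := (hTu.add (hAu.const_smul l)).norm
    have hrhs : Filter.Tendsto (fun n : ℕ => 1 - (1/(n+1:ℝ)) * l) L'' (𝓝 1) := by
      have h3 := tendsto_const_nhds (x := (1:ℝ)) (f := L'') |>.sub (ht0'.mul_const l)
      simpa using h3
    refine le_of_tendsto_of_tendsto hrhs hnorm2 ?_
    have hev : ∀ᶠ (n : ℕ) in L'', (1/(n+1:ℝ)) < l := ht0'.eventually_lt_const hl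
    filter_upwards [hev] with n hn
    set t : ℝ := 1/(n+1:ℝ) with htdef
    have htpos : 0 < t := by positivity
    have hs1 : t/l ≤ 1 := (div_le_one hl).mpr hn.le
    have hspos : 0 < t/l := div_pos htpos hl
    have hTzn : ‖T (u n)‖ ≤ 1 := by
      have := T.unit_le_opNorm (u n) (hu1 n)
      rwa [hT] at this
    have hid : T (u n) + t • A (u n)
        = (1 - t/l) • T (u n) + (t/l) • (T (u n) + l • A (u n)) := by
      have hc : (t/l) * l = t := div_mul_cancel₀ t hl.ne'
      rw [smul_add, smul_smul, hc, ← add_assoc, ← add_smul, sub_add_cancel, one_smul]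
    have hub : ‖T (u n) + t • A (u n)‖
        ≤ (1 - t/l) * 1 + (t/l) * ‖T (u n) + l • A (u n)‖ := by
      rw [hid]
      refine (norm_add_le _ _).trans ?_
      rw [norm_smul, norm_smul, Real.norm_of_nonneg (by linarith),
        Real.norm_of_nonneg hspos.le]
      gcongr
    have hlb : 1 - t^2 ≤ ‖T (u n) + t • A (u n)‖ := by
      have h4 := hu2 n
      have happ : (T + t • A) (u n) = T (u n) + t • A (u n) := by simp
      rw [happ] at h4
      have h5 := h t
      linarith
    set G := ‖T (u n) + l • A (u n)‖ with hGdef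
    have hG : 1 - t^2 ≤ (1 - t/l) * 1 + (t/l) * G := hlb.trans hub
    have h3 : (t/l) * (1 - t*l) ≤ (t/l) * G := by
      have hexp : (t/l) * (1 - t*l) = t/l - t^2 := by
        field_simp
      nlinarith
    exact (mul_le_mul_iff_right₀ hspos).mp h3
  rcases hxmem with hxx | hxx
  · rwa [hxx] at hkey
  · rw [hxx] at hkey
    rwa [map_neg, map_neg, smul_neg, ← neg_add, norm_neg] at hkey

end Key

/-- If the unit sphere of a reflexive Banach space `X` contains no left-symmetric
points, `T : X → Y` is a norm-one compact operator with `M_T = {x₀, -x₀}`, and `T` is left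
orthogonality preserving at `x₀`, then `T` is not a right-symmetric point of the space of
compact operators from `X` to `Y`. -/
theorem not_rightSymmetric_of_no_leftSymmetric {X Y : Type*}
    [NormedAddCommGroup X] [NormedSpace ℝ X] [CompleteSpace X]
    [NormedAddCommGroup Y] [NormedSpace ℝ Y]
    (hX : ReflexiveSpace X)
    (hnols : ∀ x : X, ‖x‖ = 1 → ¬ LeftSymmetricPt x)
    (T : X →L[ℝ] Y) (hTc : IsCompactOperator T) (hT : ‖T‖ = 1)
    (x₀ : X) (hx₀ : ‖x₀‖ = 1)
    (hMT : {x : X | ‖x‖ = 1 ∧ ‖T x‖ = ‖T‖} = {x₀, -x₀})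
    (hop : LeftOPAt T x₀) :
    ¬ RightSymmetricCompactOp T := by
  intro hrs
  -- a direction witnessing failure of left-symmetry at x₀
  obtain ⟨y, hxy, hyx⟩ : ∃ y : X, BJOrth x₀ y ∧ ¬ BJOrth y x₀ := by
    have h0 := hnols x₀ hx₀
    unfold LeftSymmetricPt at h0
    push_neg at h0
    exact h0
  have hy0 : y ≠ 0 := by
    rintro rfl
    exact hyx fun lam => by rw [norm_zero]; exact norm_nonneg (0 + lam • x₀)
  have hyn : 0 < ‖y‖ := norm_pos_iff.mpr hy0
  set y' : X := ‖y‖⁻¹ • y with hy'def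
  have hy'1 : ‖y'‖ = 1 := by
    rw [hy'def, norm_smul, Real.norm_of_nonneg (inv_nonneg.mpr hyn.le),
      inv_mul_cancel₀ hyn.ne']
  have hxy' : BJOrth x₀ y' := by
    intro lam
    have h1 := hxy (lam * ‖y‖⁻¹)
    simpa [hy'def, smul_smul] using h1
  have hy'x : ¬ BJOrth y' x₀ := by
    intro hB
    apply hyx
    intro lam
    have h1 := hB (‖y‖⁻¹ * lam)
    rw [hy'def] at h1
    have h2 : ‖y‖⁻¹ • y + (‖y‖⁻¹ * lam) • x₀ = ‖y‖⁻¹ • (y + lam • x₀) := by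
      rw [smul_add, smul_smul]
    rw [h2, norm_smul, norm_smul, Real.norm_of_nonneg (inv_nonneg.mpr hyn.le)] at h1
    exact (mul_le_mul_iff_right₀ (inv_pos.mpr hyn)).mp h1
  have hy'0 : y' ≠ 0 := by
    intro h0
    rw [h0, norm_zero] at hy'1
    norm_num at hy'1
  obtain ⟨f, hf1, hf2⟩ := exists_dual_vector ℝ y' (norm_ne_zero_iff.mpr hy'0)
  have hfy' : f y' = 1 := by rw [hf2, hy'1]; norm_num
  have hfx₀ : f x₀ ≠ 0 := by
    intro h0
    apply hy'x
    intro lam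
    have hf3 : f (y' + lam • x₀) = 1 := by
      have hz : f (lam • x₀) = 0 := by rw [map_smul, h0, smul_zero]
      rw [map_add, hz, add_zero, hfy']
    calc ‖y'‖ = ‖f (y' + lam • x₀)‖ := by rw [hf3, hy'1, norm_one]
      _ ≤ ‖f‖ * ‖y' + lam • x₀‖ := f.le_opNorm _
      _ = ‖y' + lam • x₀‖ := by rw [hf1, one_mul]
  have hTx₀ : ‖T x₀‖ = 1 := by
    have hmem : x₀ ∈ {x : X | ‖x‖ = 1 ∧ ‖T x‖ = ‖T‖} := by
      rw [hMT]; exact Set.mem_insert _ _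
    rw [hmem.2, hT]
  set A : X →L[ℝ] Y := f.smulRight (T x₀) with hAdef
  have hAapp : ∀ z : X, A z = f z • T x₀ := fun z => rfl
  have hAn : ‖A‖ = 1 := by
    rw [hAdef, ContinuousLinearMap.norm_smulRight_apply, hf1, hTx₀, one_mul]
  have hAc : IsCompactOperator A := by
    refine ⟨(fun t : ℝ => t • T x₀) '' Set.Icc (-1) 1,
      isCompact_Icc.image (continuous_id.smul continuous_const), ?_⟩
    refine Filter.mem_of_superset (Metric.ball_mem_nhds (0:X) one_pos) ?_
    intro z hz
    have hz1 : ‖z‖ < 1 := by simp [mem_ball_zero_iff] at hz; exact hz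
    have hfz : |f z| ≤ 1 := by
      have h3 := f.le_opNorm z
      rw [hf1, one_mul] at h3
      calc |f z| = ‖f z‖ := rfl
        _ ≤ ‖z‖ := h3
        _ ≤ 1 := hz1.le
    exact ⟨f z, Set.mem_Icc.mpr (abs_le.mp hfz), (hAapp z).symm⟩
  have hAT : BJOrth A T := by
    intro lam
    rw [hAn]
    calc (1:ℝ) = ‖T x₀‖ := hTx₀.symm
      _ ≤ ‖T x₀ + lam • T y'‖ := hop y' hxy' lam
      _ = ‖(A + lam • T) y'‖ := by
          simp only [ContinuousLinearMap.add_apply, ContinuousLinearMap.coe_smul',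
            Pi.smul_apply, hAapp, hfy', one_smul]
      _ ≤ ‖A + lam • T‖ := (A + lam • T).unit_le_opNorm y' hy'1.le
  have hTA : BJOrth T A := hrs A hAc hAT
  have hTAn : ∀ lam : ℝ, 1 ≤ ‖T + lam • A‖ := fun lam => by
    rw [← hT]; exact hTA lam
  have hpos := key_step hX T A hTc hAc hT x₀ hMT hTAn
  have hAcneg : IsCompactOperator (-A : X →L[ℝ] Y) := by
    have h5 := hAc.neg
    have hco : (⇑(-A : X →L[ℝ] Y)) = fun z => -(A z) := by
      funext z; simp
    rw [hco]
    exact h5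
  have hnegn : ∀ lam : ℝ, 1 ≤ ‖T + lam • (-A : X →L[ℝ] Y)‖ := fun lam => by
    rw [smul_neg, ← neg_smul]
    exact hTAn (-lam)
  have hneg := key_step hX T (-A) hTc hAcneg hT x₀ hMT hnegn
  have hall : ∀ lam : ℝ, 1 ≤ ‖T x₀ + lam • A x₀‖ := by
    intro lam
    rcases lt_trichotomy lam 0 with hlt | heq | hgt
    · have h1 := hneg (-lam) (by linarith)
      rw [ContinuousLinearMap.neg_apply, smul_neg, neg_smul, neg_neg] at h1
      exact h1
    · rw [heq, zero_smul, add_zero, hTx₀]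
    · exact hpos lam hgt
  have hcon := hall (-(f x₀)⁻¹)
  rw [hAapp, smul_smul] at hcon
  have hc1 : -(f x₀)⁻¹ * f x₀ = -1 := by
    field_simp
  rw [hc1, neg_smul, one_smul, add_neg_cancel, norm_zero] at hcon
  linarith
end

section
/- Let X be a smooth reflexive real Banach space and T a compact linear operator from X to X with operator norm 1 such that M_T = {x₀, −x₀} for some unit vector x₀ ∈ X. If T is a right-symmetric point of the space of compact operators on X (with the operator norm), then x₀ is a left-symmetric point of X. -/
open Filter Topology Metric Set

noncomputable section

variable {E : Type*} [NormedAddCommGroup E] [NormedSpace ℝ E]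

/-- right difference quotient of the norm at `u` in direction `v` -/
def slopeN (u v : E) (t : ℝ) : ℝ := (‖u + t • v‖ - ‖u‖) / t

/-- right Gateaux derivative of the norm at `u` in direction `v` -/
def NF (u v : E) : ℝ := sInf (slopeN u v '' Ioi (0:ℝ))

lemma neg_norm_le_slopeN (u v : E) {t : ℝ} (ht : 0 < t) : -‖v‖ ≤ slopeN u v t := by
  have h1 : ‖u‖ ≤ ‖u + t • v‖ + ‖t • v‖ := by
    calc ‖u‖ = ‖u + t • v - t • v‖ := by rw [add_sub_cancel_right]
    _ ≤ ‖u + t • v‖ + ‖t • v‖ := norm_sub_le _ _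
  have h2 : ‖t • v‖ = t * ‖v‖ := by
    rw [norm_smul, Real.norm_eq_abs, abs_of_pos ht]
  rw [slopeN, le_div_iff₀ ht]
  nlinarith

lemma slopeN_le (u v : E) {t : ℝ} (ht : 0 < t) : slopeN u v t ≤ ‖v‖ := by
  have h1 : ‖u + t • v‖ ≤ ‖u‖ + t * ‖v‖ := by
    calc ‖u + t • v‖ ≤ ‖u‖ + ‖t • v‖ := norm_add_le _ _
    _ = ‖u‖ + t * ‖v‖ := by rw [norm_smul, Real.norm_eq_abs, abs_of_pos ht]
  rw [slopeN, div_le_iff₀ ht]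
  nlinarith

lemma slopeN_mono (u v : E) {s t : ℝ} (hs : 0 < s) (hst : s ≤ t) :
    slopeN u v s ≤ slopeN u v t := by
  have ht : 0 < t := lt_of_lt_of_le hs hst
  have hcombo : u + s • v = (s/t) • (u + t • v) + (1 - s/t) • u := by
    have h : s / t * t = s := div_mul_cancel₀ s ht.ne'
    rw [smul_add, smul_smul, h]
    module
  have hnn : (0:ℝ) ≤ s / t := le_of_lt (div_pos hs ht)
  have hle1 : (0:ℝ) ≤ 1 - s / t := by
    have : s / t ≤ 1 := (div_le_one ht).2 hst
    linarith
  have hnorm : ‖u + s • v‖ ≤ (s/t) * ‖u + t • v‖ + (1 - s/t) * ‖u‖ := by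
    rw [hcombo]
    calc ‖(s/t) • (u + t • v) + (1 - s/t) • u‖
        ≤ ‖(s/t) • (u + t • v)‖ + ‖(1 - s/t) • u‖ := norm_add_le _ _
    _ = (s/t) * ‖u + t • v‖ + (1 - s/t) * ‖u‖ := by
        rw [norm_smul, norm_smul, Real.norm_eq_abs, Real.norm_eq_abs,
          abs_of_nonneg hnn, abs_of_nonneg hle1]
  rw [slopeN, slopeN, div_le_div_iff₀ hs ht]
  have h3 : t * (s / t * ‖u + t • v‖ + (1 - s / t) * ‖u‖) = s * ‖u + t • v‖ + (t - s) * ‖u‖ := by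
    field_simp
  have h4 := mul_le_mul_of_nonneg_left hnorm (le_of_lt ht)
  nlinarith

lemma slopeN_nonempty (u v : E) : (slopeN u v '' Ioi (0:ℝ)).Nonempty :=
  ⟨_, mem_image_of_mem _ (mem_Ioi.2 one_pos)⟩

lemma slopeN_bddBelow (u v : E) : BddBelow (slopeN u v '' Ioi (0:ℝ)) := by
  refine ⟨-‖v‖, ?_⟩
  rintro s ⟨t, ht, rfl⟩
  exact neg_norm_le_slopeN u v ht

lemma NF_le_slopeN (u v : E) {t : ℝ} (ht : 0 < t) : NF u v ≤ slopeN u v t :=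
  csInf_le (slopeN_bddBelow u v) (mem_image_of_mem _ ht)

lemma le_NF (u v : E) {c : ℝ} (h : ∀ t : ℝ, 0 < t → c ≤ slopeN u v t) : c ≤ NF u v := by
  refine le_csInf (slopeN_nonempty u v) ?_
  rintro s ⟨t, ht, rfl⟩
  exact h t ht

lemma exists_slopeN_lt (u v : E) {ε : ℝ} (hε : 0 < ε) :
    ∃ t : ℝ, 0 < t ∧ slopeN u v t < NF u v + ε := by
  have h : NF u v < NF u v + ε := by linarith
  obtain ⟨s, hs, hlt⟩ := exists_lt_of_csInf_lt (slopeN_nonempty u v) h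
  obtain ⟨t, ht, rfl⟩ := hs
  exact ⟨t, ht, hlt⟩

lemma NF_add (u v w : E) : NF u (v + w) ≤ NF u v + NF u w := by
  refine le_of_forall_pos_le_add ?_
  intro ε hε
  obtain ⟨t₁, ht₁, h₁⟩ := exists_slopeN_lt u v (half_pos hε)
  obtain ⟨t₂, ht₂, h₂⟩ := exists_slopeN_lt u w (half_pos hε)
  set t := min t₁ t₂ / 2 with htdef
  have ht : 0 < t := by positivity
  have h2t1 : 2 * t ≤ t₁ := by
    have := min_le_left t₁ t₂; rw [htdef]; linarith
  have h2t2 : 2 * t ≤ t₂ := by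
    have := min_le_right t₁ t₂; rw [htdef]; linarith
  have key : slopeN u (v + w) t ≤ slopeN u v (2*t) + slopeN u w (2*t) := by
    have hmid : u + t • (v + w) = (1/2 : ℝ) • (u + (2*t) • v) + (1/2 : ℝ) • (u + (2*t) • w) := by
      module
    have hnorm : ‖u + t • (v + w)‖ ≤ (1/2) * ‖u + (2*t) • v‖ + (1/2) * ‖u + (2*t) • w‖ := by
      rw [hmid]
      calc ‖(1/2 : ℝ) • (u + (2*t) • v) + (1/2 : ℝ) • (u + (2*t) • w)‖
          ≤ ‖(1/2 : ℝ) • (u + (2*t) • v)‖ + ‖(1/2 : ℝ) • (u + (2*t) • w)‖ := norm_add_le _ _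
      _ = (1/2) * ‖u + (2*t) • v‖ + (1/2) * ‖u + (2*t) • w‖ := by
          rw [norm_smul, norm_smul]; norm_num
    have h2t : (0:ℝ) < 2 * t := by linarith
    rw [slopeN, slopeN, slopeN, ← add_div, div_le_div_iff₀ ht h2t]
    nlinarith
  have mv : slopeN u v (2*t) ≤ slopeN u v t₁ := slopeN_mono u v (by linarith) h2t1
  have mw : slopeN u w (2*t) ≤ slopeN u w t₂ := slopeN_mono u w (by linarith) h2t2
  have := NF_le_slopeN u (v+w) ht
  linarith

lemma NF_zero (u : E) : NF u 0 = 0 := by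
  have h0 : ∀ t : ℝ, 0 < t → slopeN u (0:E) t = 0 := by
    intro t ht
    simp [slopeN]
  refine le_antisymm ?_ ?_
  · have := NF_le_slopeN u (0:E) one_pos
    rw [h0 1 one_pos] at this; exact this
  · exact le_NF u 0 (fun t ht => (h0 t ht).ge)

lemma NF_smul (u v : E) {c : ℝ} (hc : 0 < c) : NF u (c • v) = c * NF u v := by
  have hs : ∀ t : ℝ, 0 < t → slopeN u (c • v) t = c * slopeN u v (t * c) := by
    intro t ht
    have htc : (0:ℝ) < t * c := mul_pos ht hc
    rw [slopeN, slopeN, smul_smul]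
    field_simp
  refine le_antisymm ?_ ?_
  · refine le_of_forall_pos_le_add ?_
    intro ε hε
    obtain ⟨t, ht, hlt⟩ := exists_slopeN_lt u v (show 0 < ε / c by positivity)
    have := NF_le_slopeN u (c • v) (show 0 < t / c by positivity)
    rw [hs _ (show 0 < t / c by positivity), div_mul_cancel₀ t hc.ne'] at this
    calc NF u (c • v) ≤ c * slopeN u v t := this
    _ ≤ c * (NF u v + ε / c) := by
        have := hlt.le
        nlinarith
    _ = c * NF u v + ε := by field_simp
  · refine le_csInf (slopeN_nonempty u (c • v)) ?_
    rintro s ⟨t, ht, rfl⟩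
    rw [hs t ht]
    have := NF_le_slopeN u v (mul_pos (mem_Ioi.1 ht) hc)
    nlinarith [mem_Ioi.1 ht]

lemma NF_self (u : E) : NF u u = ‖u‖ := by
  have hs : ∀ t : ℝ, 0 < t → slopeN u u t = ‖u‖ := by
    intro t ht
    have : u + t • u = (1 + t) • u := by module
    rw [slopeN, this, norm_smul, Real.norm_eq_abs, abs_of_pos (by linarith : (0:ℝ) < 1 + t)]
    field_simp
    ring
  refine le_antisymm ?_ (le_NF u u (fun t ht => (hs t ht).ge))
  have := NF_le_slopeN u u one_pos
  rw [hs 1 one_pos] at this; exact this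

lemma NF_neg_self (u : E) : NF u (-u) ≤ -‖u‖ := by
  have := NF_le_slopeN u (-u) (show (0:ℝ) < 1/2 by norm_num)
  have h : slopeN u (-u) (1/2 : ℝ) = -‖u‖ := by
    have : u + (1/2 : ℝ) • (-u) = (1/2 : ℝ) • u := by module
    rw [slopeN, this, norm_smul, Real.norm_eq_abs]
    rw [abs_of_pos (by norm_num : (0:ℝ) < 1/2)]
    ring
  rw [h] at this; exact this

lemma NF_le_norm (u v : E) : NF u v ≤ ‖v‖ := by
  have := NF_le_slopeN u v one_pos
  exact this.trans (slopeN_le u v one_pos)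

/-- Hahn-Banach: a support functional at `u` whose value at `v` is `NF u v`. -/
lemma exists_support_NF (u : E) (hu : u ≠ 0) (v : E) :
    ∃ F : E →L[ℝ] ℝ, (‖F‖ = 1 ∧ F u = ‖u‖) ∧ F v = NF u v := by
  have N_hom : ∀ c : ℝ, 0 < c → ∀ x : E, NF u (c • x) = c * NF u x := fun c hc x => NF_smul u x hc
  have N_add : ∀ x y : E, NF u (x + y) ≤ NF u x + NF u y := NF_add u
  have Nsum : ∀ x : E, 0 ≤ NF u x + NF u (-x) := by
    intro x
    have := NF_add u x (-x)
    rw [add_neg_cancel, NF_zero] at this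
    linarith
  by_cases hv : v = 0
  · obtain ⟨F, hF1, hFu⟩ := exists_dual_vector ℝ u (norm_ne_zero_iff.2 hu)
    refine ⟨F, ⟨hF1, by simpa using hFu⟩, by simp [hv, NF_zero]⟩
  · set f : E →ₗ.[ℝ] ℝ := LinearPMap.mkSpanSingleton v (NF u v) hv with hfdef
    have hdom : ∀ x : f.domain, f x ≤ NF u (x : E) := by
      rintro ⟨z, hz⟩
      have hz' : z ∈ Submodule.span ℝ {v} := hz
      obtain ⟨c, rfl⟩ := Submodule.mem_span_singleton.1 hz'
      have happ : (LinearPMap.mkSpanSingleton v (NF u v) hv) ⟨c • v, hz⟩ = c • (NF u v) := by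
        exact LinearPMap.mkSpanSingleton'_apply v (NF u v) _ c hz
      rw [happ]
      rcases lt_trichotomy c 0 with hc | hc | hc
      · have h1 : NF u (c • v) = (-c) * NF u (-v) := by
          have : c • v = (-c) • (-v) := by module
          rw [this, NF_smul u (-v) (by linarith)]
        have h2 := Nsum v
        rw [h1]
        rw [smul_eq_mul]
        nlinarith
      · simp [hc, NF_zero]
      · rw [NF_smul u v hc, smul_eq_mul]
    obtain ⟨g, hg1, hg2⟩ := exists_extension_of_le_sublinear f (NF u) N_hom N_add hdom
    have hgv : g v = NF u v := by
      have hmem : v ∈ f.domain := by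
        rw [hfdef]
        exact Submodule.mem_span_singleton_self v
      exact (hg1 ⟨v, hmem⟩).trans (LinearPMap.mkSpanSingleton_apply ℝ ℝ hv (NF u v))
    have hbound : ∀ x : E, ‖g x‖ ≤ 1 * ‖x‖ := by
      intro x
      rw [Real.norm_eq_abs, one_mul, abs_le]
      constructor
      · have := (hg2 (-x)).trans (NF_le_norm u (-x))
        rw [map_neg, norm_neg] at this
        linarith
      · exact (hg2 x).trans (NF_le_norm u x)
    set F : E →L[ℝ] ℝ := g.mkContinuous 1 hbound with hFdef
    have hFapp : ∀ x, F x = g x := fun x => rfl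
    have hFu : F u = ‖u‖ := by
      have h1 : g u ≤ ‖u‖ := by
        have := hg2 u; rwa [NF_self] at this
      have h2 : g (-u) ≤ -‖u‖ := (hg2 (-u)).trans (NF_neg_self u)
      rw [map_neg] at h2
      rw [hFapp]; linarith
    have hFnorm : ‖F‖ = 1 := by
      refine le_antisymm (g.mkContinuous_norm_le zero_le_one hbound) ?_
      have := F.le_opNorm u
      rw [hFu, norm_norm] at this
      have hun : 0 < ‖u‖ := norm_pos_iff.2 hu
      nlinarith [this, hun]
    exact ⟨F, ⟨hFnorm, hFu⟩, by rw [hFapp, hgv]⟩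


lemma le_NF' (u v : E) {c : ℝ} (h : ∀ t : ℝ, 0 < t → c * t ≤ ‖u + t • v‖ - ‖u‖) :
    c ≤ NF u v := by
  apply le_NF
  intro t ht
  rw [slopeN, le_div_iff₀ ht]
  have := h t ht
  linarith

lemma smooth_NF_add_neg {u : E} (hu : u ≠ 0) (hsm : SmoothPoint u) (v : E) :
    NF u v + NF u (-v) = 0 := by
  obtain ⟨f, -, huniq⟩ := hsm
  obtain ⟨F1, hF1, hF1v⟩ := exists_support_NF u hu v
  obtain ⟨F2, hF2, hF2v⟩ := exists_support_NF u hu (-v)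
  have e1 : F1 = f := huniq F1 hF1
  have e2 : F2 = f := huniq F2 hF2
  have h1 : NF u v = f v := by rw [← hF1v, e1]
  have h2 : NF u (-v) = -(f v) := by rw [← hF2v, e2, map_neg]
  rw [h1, h2]; ring

lemma squeeze_lemma {u v : E} (hu : u ≠ 0) (hsm : SmoothPoint u) (horth : BJOrth u v)
    {c : ℝ} (hc : ∀ lam : ℝ, ‖u‖ + lam * c ≤ ‖u + lam • v‖) : c = 0 := by
  have h1 : c ≤ NF u v := by
    apply le_NF'
    intro t ht
    have := hc t
    nlinarith
  have h2 : -c ≤ NF u (-v) := by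
    apply le_NF'
    intro t ht
    have := hc (-t)
    have h : (-t) • v = t • (-v) := by module
    rw [h] at this
    nlinarith
  have h3 : (0:ℝ) ≤ NF u v := by
    apply le_NF'; intro t ht
    have := horth t; nlinarith
  have h4 : (0:ℝ) ≤ NF u (-v) := by
    apply le_NF'
    intro t ht
    have := horth (-t)
    have h : (-t) • v = t • (-v) := by module
    rw [h] at this
    nlinarith
  have h5 := smooth_NF_add_neg hu hsm v
  linarith

lemma orth_preserve {X : Type*} [NormedAddCommGroup X] [NormedSpace ℝ X]
    (hsmooth : ∀ x : X, x ≠ 0 → SmoothPoint x)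
    (T : X →L[ℝ] X) (hT : ‖T‖ = 1) {x₀ : X} (hx₀ : ‖x₀‖ = 1) (hTx₀ : ‖T x₀‖ = 1)
    {y : X} (horth : BJOrth x₀ y) : BJOrth (T x₀) (T y) := by
  have hTx₀ne : T x₀ ≠ 0 := by
    intro h; rw [h, norm_zero] at hTx₀; norm_num at hTx₀
  have hx₀ne : x₀ ≠ 0 := by
    intro h; rw [h, norm_zero] at hx₀; norm_num at hx₀
  obtain ⟨h, ⟨hh1, hh2⟩, -⟩ := hsmooth (T x₀) hTx₀ne
  have hbound : ∀ z : X, h z ≤ ‖z‖ := by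
    intro z
    calc h z ≤ |h z| := le_abs_self _
    _ = ‖h z‖ := (Real.norm_eq_abs _).symm
    _ ≤ ‖h‖ * ‖z‖ := h.le_opNorm z
    _ = ‖z‖ := by rw [hh1, one_mul]
  have key : ∀ lam : ℝ, ‖x₀‖ + lam * (h (T y)) ≤ ‖x₀ + lam • y‖ := by
    intro lam
    have e1 : ‖x₀‖ + lam * h (T y) = h (T x₀ + lam • T y) := by
      rw [map_add, map_smul, smul_eq_mul, hh2, hTx₀, hx₀]
    have e3 : T x₀ + lam • T y = T (x₀ + lam • y) := by
      rw [map_add, map_smul]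
    have e4 : ‖T (x₀ + lam • y)‖ ≤ ‖x₀ + lam • y‖ := by
      have := T.le_opNorm (x₀ + lam • y)
      rwa [hT, one_mul] at this
    calc ‖x₀‖ + lam * h (T y) = h (T x₀ + lam • T y) := e1
    _ ≤ ‖T x₀ + lam • T y‖ := hbound _
    _ = ‖T (x₀ + lam • y)‖ := by rw [e3]
    _ ≤ ‖x₀ + lam • y‖ := e4
  have hc0 : h (T y) = 0 := squeeze_lemma hx₀ne (hsmooth x₀ hx₀ne) horth key
  intro lam
  calc ‖T x₀‖ = h (T x₀ + lam • T y) := by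
        rw [map_add, map_smul, smul_eq_mul, hh2, hc0, hTx₀]; ring
  _ ≤ ‖T x₀ + lam • T y‖ := hbound _

lemma weak_cluster {X : Type*} [NormedAddCommGroup X] [NormedSpace ℝ X]
    (hX : ReflexiveSpace X) (U : Ultrafilter ℕ) (x : ℕ → X) (hx : ∀ n, ‖x n‖ ≤ 1) :
    ∃ z : X, ‖z‖ ≤ 1 ∧ ∀ f : X →L[ℝ] ℝ, Tendsto (fun n => f (x n)) (U : Filter ℕ) (𝓝 (f z)) := by
  classical
  set D := StrongDual ℝ X with hD
  set J : X →L[ℝ] StrongDual ℝ D := NormedSpace.inclusionInDoubleDual ℝ X with hJ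
  have hJle : ∀ w : X, ‖J w‖ ≤ ‖w‖ := fun w => NormedSpace.double_dual_bound ℝ X w
  have hJge : ∀ w : X, ‖w‖ ≤ ‖J w‖ := by
    intro w
    rcases eq_or_ne w 0 with rfl | hw
    · rw [norm_zero]; exact norm_nonneg (J 0)
    · obtain ⟨f, hf1, hfw⟩ := exists_dual_vector ℝ w (norm_ne_zero_iff.2 hw)
      have h1 : ‖(J w) f‖ ≤ ‖J w‖ * ‖f‖ := (J w).le_opNorm f
      have h2 : (J w) f = f w := rfl
      rw [h2, hfw, hf1, mul_one] at h1
      simpa using h1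
  set S : Set (WeakDual ℝ D) := WeakDual.toStrongDual ⁻¹' Metric.closedBall 0 1 with hS
  have hcpt : IsCompact S := WeakDual.isCompact_closedBall (𝕜 := ℝ) (E := D) 0 1
  set w : ℕ → WeakDual ℝ D := fun n => StrongDual.toWeakDual (J (x n)) with hw
  have hwS : ∀ n, w n ∈ S := by
    intro n
    simp only [hS, Set.mem_preimage, Metric.mem_closedBall, dist_zero_right]
    exact (dist_zero_right (WeakDual.toStrongDual (w n))).le.trans (le_trans (hJle (x n)) (hx n))
  have hle : (Ultrafilter.map w U : Filter (WeakDual ℝ D)) ≤ Filter.principal S := by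
    rw [Filter.le_principal_iff]
    exact Filter.mem_map.2 (Filter.Eventually.of_forall hwS)
  obtain ⟨Φ, hΦS, hΦ⟩ := hcpt.ultrafilter_le_nhds (Ultrafilter.map w U) hle
  obtain ⟨z, hz⟩ := hX (WeakDual.toStrongDual Φ)
  have hzn : ‖z‖ ≤ 1 := by
    have h1 : ‖J z‖ ≤ 1 := by
      rw [hz]
      have hΦS' : WeakDual.toStrongDual Φ ∈ Metric.closedBall (0 : StrongDual ℝ D) 1 := hΦS
      rw [Metric.mem_closedBall] at hΦS'
      exact (dist_zero_right (WeakDual.toStrongDual Φ)).ge.trans hΦS'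
    exact le_trans (hJge z) h1
  refine ⟨z, hzn, ?_⟩
  intro f
  have hwU : Tendsto w (U : Filter ℕ) (𝓝 Φ) := hΦ
  have hev : Tendsto (fun φ : WeakDual ℝ D => φ f) (𝓝 Φ) (𝓝 (Φ f)) :=
    (WeakDual.eval_continuous f).tendsto Φ
  have hcomp := hev.comp hwU
  have heq1 : (fun n => (w n) f) = fun n => f (x n) := rfl
  have heq2 : Φ f = f z := by
    have : (WeakDual.toStrongDual Φ) f = Φ f := rfl
    rw [← this, ← hz]
    rfl
  rw [← heq1, ← heq2]
  exact hcomp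

lemma compact_norm_conv {X : Type*} [NormedAddCommGroup X] [NormedSpace ℝ X]
    (S : X →L[ℝ] X) (hS : IsCompactOperator S) (U : Ultrafilter ℕ)
    (x : ℕ → X) (hx : ∀ n, ‖x n‖ ≤ 1) (z : X)
    (hwconv : ∀ f : X →L[ℝ] ℝ, Tendsto (fun n => f (x n)) (U : Filter ℕ) (𝓝 (f z))) :
    Tendsto (fun n => S (x n)) (U : Filter ℕ) (𝓝 (S z)) := by
  have hS' : IsCompactOperator (S : X →ₗ[ℝ] X) := hS
  obtain ⟨K, hK, hKsub⟩ := hS'.image_closedBall_subset_compact 1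
  have hmem : ∀ n, S (x n) ∈ K := by
    intro n
    apply hKsub
    exact ⟨x n, by simpa [Metric.mem_closedBall, dist_zero_right] using hx n, rfl⟩
  have hle : (Ultrafilter.map (fun n => S (x n)) U : Filter X) ≤ Filter.principal K := by
    rw [Filter.le_principal_iff]
    exact Filter.mem_map.2 (Filter.Eventually.of_forall hmem)
  obtain ⟨p, hpK, hp⟩ := hK.ultrafilter_le_nhds _ hle
  have hptend : Tendsto (fun n => S (x n)) (U : Filter ℕ) (𝓝 p) := hp
  have hpz : p = S z := by
    rw [NormedSpace.eq_iff_forall_dual_eq ℝ]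
    intro g
    have h1 : Tendsto (fun n => g (S (x n))) (U : Filter ℕ) (𝓝 (g p)) :=
      (g.continuous.tendsto p).comp hptend
    have h2 : Tendsto (fun n => g (S (x n))) (U : Filter ℕ) (𝓝 (g (S z))) := by
      have := hwconv (g.comp S)
      simpa using this
    exact tendsto_nhds_unique h1 h2
  rw [← hpz]
  exact hptend


section Main
variable {X : Type*} [NormedAddCommGroup X] [NormedSpace ℝ X]

lemma exists_near_norm (B : X →L[ℝ] X) {ε : ℝ} (hε : 0 < ε) (hB : 0 < ‖B‖) :
    ∃ x : X, ‖x‖ ≤ 1 ∧ ‖B‖ - ε ≤ ‖B x‖ := by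
  rcases le_or_gt ‖B‖ ε with hBe | hBe
  · exact ⟨0, by simp, by simp; linarith⟩
  by_contra hcon
  push_neg at hcon
  have hb : ∀ x : X, ‖B x‖ ≤ (‖B‖ - ε) * ‖x‖ := by
    intro x
    rcases eq_or_ne x 0 with rfl | hx
    · simp
    · have hxn : 0 < ‖x‖ := norm_pos_iff.2 hx
      have hunit : ‖(‖x‖⁻¹ • x)‖ ≤ 1 := by
        rw [norm_smul, Real.norm_eq_abs, abs_of_pos (by positivity)]
        rw [inv_mul_cancel₀ hxn.ne']
      have := (hcon (‖x‖⁻¹ • x) hunit).le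
      rw [map_smul, norm_smul, Real.norm_eq_abs, abs_of_pos (show (0:ℝ) < ‖x‖⁻¹ by positivity)]
        at this
      have h2 := mul_le_mul_of_nonneg_left this hxn.le
      rw [← mul_assoc, mul_inv_cancel₀ hxn.ne', one_mul] at h2
      nlinarith
  have := B.opNorm_le_bound (by linarith) hb
  linarith

lemma hard_side (hX : ReflexiveSpace X) (T A : X →L[ℝ] X) (hTc : IsCompactOperator T)
    (hAc : IsCompactOperator A) (hT : ‖T‖ = 1) (x₀ : X)
    (hMT : {x : X | ‖x‖ = 1 ∧ ‖T x‖ = ‖T‖} = {x₀, -x₀})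
    (hTA : BJOrth T A) : ∀ t : ℝ, 0 < t → ‖T‖ ≤ ‖T x₀ + t • A x₀‖ := by
  intro t ht
  set s : ℕ → ℝ := fun n => 1 / (n + 1) with hsdef
  have hspos : ∀ n, 0 < s n := fun n => by positivity
  have hchoice : ∀ n : ℕ, ∃ x : X, ‖x‖ ≤ 1 ∧ ‖T‖ - s n ^ 2 ≤ ‖T x + s n • A x‖ := by
    intro n
    have hTAn := hTA (s n)
    have hpos : (0:ℝ) < ‖T + s n • A‖ := by rw [hT] at hTAn; linarith
    obtain ⟨x, hx1, hx2⟩ := exists_near_norm (T + s n • A) (show 0 < s n ^ 2 by positivity) hpos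
    refine ⟨x, hx1, ?_⟩
    have happ : (T + s n • A) x = T x + s n • A x := by
      simp [ContinuousLinearMap.add_apply, ContinuousLinearMap.smul_apply]
    rw [happ] at hx2
    linarith
  choose xs hxs1 hxs2 using hchoice
  set U : Ultrafilter ℕ := Ultrafilter.of atTop with hUdef
  have hUle : (U : Filter ℕ) ≤ atTop := Ultrafilter.of_le atTop
  obtain ⟨z, hz1, hz2⟩ := weak_cluster hX U xs hxs1
  have hTconv := compact_norm_conv T hTc U xs hxs1 z hz2
  have hAconv := compact_norm_conv A hAc U xs hxs1 z hz2
  have hs0 : Tendsto s atTop (𝓝 0) := by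
    have := tendsto_one_div_add_atTop_nhds_zero_nat (𝕜 := ℝ)
    exact this
  have hs0U : Tendsto s (U : Filter ℕ) (𝓝 0) := hs0.mono_left hUle
  -- ‖T z‖ = ‖T‖
  have hTxsle : ∀ n, ‖T (xs n)‖ ≤ ‖T‖ := by
    intro n
    have := T.le_opNorm (xs n)
    nlinarith [hxs1 n, T.opNorm_nonneg]
  have hAxsle : ∀ n, ‖A (xs n)‖ ≤ ‖A‖ := by
    intro n
    have := A.le_opNorm (xs n)
    nlinarith [hxs1 n, A.opNorm_nonneg]
  have hTz_ge : ‖T‖ ≤ ‖T z‖ := by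
    have hlow : ∀ n, ‖T‖ - s n ^ 2 - s n * ‖A‖ ≤ ‖T (xs n)‖ := by
      intro n
      have h1 := hxs2 n
      have h3 : ‖s n • A (xs n)‖ ≤ s n * ‖A‖ := by
        rw [norm_smul, Real.norm_eq_abs, abs_of_pos (hspos n)]
        nlinarith [hAxsle n, (hspos n).le]
      have h2 : ‖T (xs n) + s n • A (xs n)‖ ≤ ‖T (xs n)‖ + s n * ‖A‖ :=
        le_trans (norm_add_le _ _) (by linarith)
      linarith
    have hlim1 : Tendsto (fun n => ‖T‖ - s n ^ 2 - s n * ‖A‖) (U : Filter ℕ) (𝓝 ‖T‖) := by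
      have h1 : Tendsto (fun n => ‖T‖ - s n ^ 2 - s n * ‖A‖) (U : Filter ℕ)
          (𝓝 (‖T‖ - 0 ^ 2 - 0 * ‖A‖)) := by
        exact ((tendsto_const_nhds.sub (hs0U.pow 2)).sub (hs0U.mul_const ‖A‖))
      simpa using h1
    have hlim2 : Tendsto (fun n => ‖T (xs n)‖) (U : Filter ℕ) (𝓝 ‖T z‖) := hTconv.norm
    exact le_of_tendsto_of_tendsto' hlim1 hlim2 hlow
  have hTz_le : ‖T z‖ ≤ ‖T‖ := by
    have := T.le_opNorm z
    nlinarith [T.opNorm_nonneg]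
  have hz_norm : ‖z‖ = 1 := by
    have h1 := T.le_opNorm z
    rw [hT] at hTz_ge h1
    refine le_antisymm hz1 ?_
    nlinarith
  have hzmem : z ∈ ({x₀, -x₀} : Set X) := by
    rw [← hMT]
    exact ⟨hz_norm, le_antisymm hTz_le hTz_ge⟩
  -- key inequality
  have hkey : ∀ n, s n ≤ t → ‖T‖ - t * s n ≤ ‖T (xs n) + t • A (xs n)‖ := by
    intro n hn
    set u := T (xs n)
    set v := A (xs n)
    have hcombo : u + s n • v = (s n / t) • (u + t • v) + (1 - s n / t) • u := by
      have h : s n / t * t = s n := div_mul_cancel₀ _ ht.ne'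
      rw [smul_add, smul_smul, h]
      module
    have hnn : (0:ℝ) ≤ s n / t := by positivity
    have hle1 : (0:ℝ) ≤ 1 - s n / t := by
      have : s n / t ≤ 1 := (div_le_one ht).2 hn
      linarith
    have hnorm : ‖u + s n • v‖ ≤ (s n / t) * ‖u + t • v‖ + (1 - s n / t) * ‖u‖ := by
      rw [hcombo]
      calc ‖(s n / t) • (u + t • v) + (1 - s n / t) • u‖
          ≤ ‖(s n / t) • (u + t • v)‖ + ‖(1 - s n / t) • u‖ := norm_add_le _ _
      _ = (s n / t) * ‖u + t • v‖ + (1 - s n / t) * ‖u‖ := by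
          rw [norm_smul, norm_smul, Real.norm_eq_abs, Real.norm_eq_abs,
            abs_of_nonneg hnn, abs_of_nonneg hle1]
    have h1 := hxs2 n
    have h2 := hTxsle n
    have h4 : t * (s n / t) = s n := mul_div_cancel₀ _ ht.ne'
    have h5 := mul_le_mul_of_nonneg_left hnorm ht.le
    -- t*‖u+s v‖ ≤ s*‖u+t v‖ + (t - s)*‖u‖
    have h6 : t * ((s n / t) * ‖u + t • v‖ + (1 - s n / t) * ‖u‖)
        = s n * ‖u + t • v‖ + (t - s n) * ‖u‖ := by
      field_simp
    rw [h6] at h5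
    have h7 : t * (‖T‖ - s n ^ 2) ≤ t * ‖u + s n • v‖ :=
      mul_le_mul_of_nonneg_left h1 ht.le
    -- conclude: s*(‖T‖ - t * s) ≤ s * ‖u + t•v‖
    have h8 : s n * (‖T‖ - t * s n) ≤ s n * ‖u + t • v‖ := by nlinarith
    have := (mul_le_mul_iff_right₀ (hspos n)).1 h8
    linarith
  have hev : ∀ᶠ n in (U : Filter ℕ), ‖T‖ - t * s n ≤ ‖T (xs n) + t • A (xs n)‖ := by
    have hst : ∀ᶠ n in atTop, s n ≤ t := hs0.eventually_le_const ht
    have hst' : ∀ᶠ n in (U : Filter ℕ), s n ≤ t := hUle hst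
    exact hst'.mono fun n hn => hkey n hn
  have hlimL : Tendsto (fun n => ‖T‖ - t * s n) (U : Filter ℕ) (𝓝 ‖T‖) := by
    have h1 : Tendsto (fun n => ‖T‖ - t * s n) (U : Filter ℕ) (𝓝 (‖T‖ - t * 0)) :=
      tendsto_const_nhds.sub (hs0U.const_mul t)
    simpa using h1
  have hlimR : Tendsto (fun n => ‖T (xs n) + t • A (xs n)‖) (U : Filter ℕ)
      (𝓝 ‖T z + t • A z‖) := (hTconv.add (hAconv.const_smul t)).norm
  have hfin : ‖T‖ ≤ ‖T z + t • A z‖ := le_of_tendsto_of_tendsto hlimL hlimR hev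
  rcases hzmem with rfl | hz'
  · exact hfin
  · rw [Set.mem_singleton_iff] at hz'
    subst hz'
    rw [map_neg, map_neg, smul_neg, ← neg_add, norm_neg] at hfin
    exact hfin

lemma hard_lemma (hX : ReflexiveSpace X) (T A : X →L[ℝ] X) (hTc : IsCompactOperator T)
    (hAc : IsCompactOperator A) (hT : ‖T‖ = 1) (x₀ : X) (hTx₀ : ‖T x₀‖ = ‖T‖)
    (hMT : {x : X | ‖x‖ = 1 ∧ ‖T x‖ = ‖T‖} = {x₀, -x₀})
    (hTA : BJOrth T A) : BJOrth (T x₀) (A x₀) := by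
  intro lam
  rcases lt_trichotomy lam 0 with h | h | h
  · have hAc' : IsCompactOperator (⇑(-A)) := by
      have := hAc.neg
      have hcoe : ⇑(-A) = -⇑A := by ext x; simp
      rwa [hcoe]
    have hTA' : BJOrth T (-A) := by
      intro μ
      have := hTA (-μ)
      have hcoe : μ • (-A) = (-μ) • A := by ext x; simp
      rwa [hcoe]
    have hside := hard_side hX T (-A) hTc hAc' hT x₀ hMT hTA' (-lam) (by linarith)
    have hcoe : (-lam) • (-A) x₀ = lam • A x₀ := by simp
    rw [hcoe] at hside
    rw [hTx₀]
    exact hside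
  · rw [h]
    simp
  · have hside := hard_side hX T A hTc hAc hT x₀ hMT hTA lam h
    rw [hTx₀]
    exact hside

end Main

end

/-- Let `X` be a smooth reflexive Banach space and `T : X → X` a norm-one compact
operator with `M_T = {x₀, -x₀}`. If `T` is a right-symmetric point of the space of compact
operators on `X`, then `x₀` is a left-symmetric point of `X`. -/
theorem leftSymmetric_of_rightSymmetric_smooth {X : Type*}
    [NormedAddCommGroup X] [NormedSpace ℝ X] [CompleteSpace X]
    (hX : ReflexiveSpace X)
    (hsmooth : ∀ x : X, x ≠ 0 → SmoothPoint x)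
    (T : X →L[ℝ] X) (hTc : IsCompactOperator T) (hT : ‖T‖ = 1)
    (x₀ : X) (hx₀ : ‖x₀‖ = 1)
    (hMT : {x : X | ‖x‖ = 1 ∧ ‖T x‖ = ‖T‖} = {x₀, -x₀})
    (hrs : RightSymmetricCompactOp T) :
    LeftSymmetricPt x₀ := by
  intro y hxy
  by_cases hy : y = 0
  · subst hy
    intro lam
    simp
  by_contra hyx
  -- x₀ attains the norm of T
  have hTx₀ : ‖T x₀‖ = ‖T‖ := by
    have hmem : x₀ ∈ ({x₀, -x₀} : Set X) := by left; rfl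
    rw [← hMT] at hmem
    exact hmem.2
  have hTx₀1 : ‖T x₀‖ = 1 := by rw [hTx₀, hT]
  have hTx₀ne : T x₀ ≠ 0 := by
    intro h; rw [h, norm_zero] at hTx₀1; norm_num at hTx₀1
  -- support functional of y
  obtain ⟨g, ⟨hg1, hgy⟩, -⟩ := hsmooth y hy
  have hgx₀ : g x₀ ≠ 0 := by
    intro h0
    apply hyx
    intro lam
    have h1 : g (y + lam • x₀) = ‖y‖ := by
      rw [map_add, map_smul, smul_eq_mul, h0, hgy]; ring
    calc ‖y‖ = g (y + lam • x₀) := h1.symm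
    _ ≤ |g (y + lam • x₀)| := le_abs_self _
    _ = ‖g (y + lam • x₀)‖ := (Real.norm_eq_abs _).symm
    _ ≤ ‖g‖ * ‖y + lam • x₀‖ := g.le_opNorm _
    _ = ‖y + lam • x₀‖ := by rw [hg1, one_mul]
  -- T preserves orthogonality at x₀
  have hOP : BJOrth (T x₀) (T y) := orth_preserve hsmooth T hT hx₀ hTx₀1 hxy
  -- the rank one operator A = g(·) • T x₀
  set A : X →L[ℝ] X := g.smulRight (T x₀) with hA
  have hAapp : ∀ x : X, A x = g x • T x₀ := fun x => rfl
  have hAnorm : ‖A‖ = 1 := by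
    rw [hA, ContinuousLinearMap.norm_smulRight_apply, hg1, hTx₀1, one_mul]
  -- A is compact (rank one)
  have hAc : IsCompactOperator (⇑A) := by
    refine ⟨(fun c : ℝ => c • T x₀) '' Metric.closedBall 0 ‖g‖, ?_, ?_⟩
    · exact (isCompact_closedBall 0 ‖g‖).image (continuous_id.smul continuous_const)
    · refine Filter.mem_of_superset (Metric.closedBall_mem_nhds (0:X) one_pos) ?_
      intro x hx
      refine ⟨g x, ?_, (hAapp x).symm⟩
      rw [Metric.mem_closedBall, dist_zero_right, Real.norm_eq_abs, ← Real.norm_eq_abs]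
      have h1 := g.le_opNorm x
      have h2 : ‖x‖ ≤ 1 := by
        rwa [Metric.mem_closedBall, dist_zero_right] at hx
      nlinarith [g.opNorm_nonneg]
  -- A ⊥_B T
  have hyn : (0:ℝ) < ‖y‖ := norm_pos_iff.2 hy
  have hAT : BJOrth A T := by
    intro lam
    set yhat : X := ‖y‖⁻¹ • y with hyhat
    have hyhatn : ‖yhat‖ = 1 := by
      rw [hyhat, norm_smul, Real.norm_eq_abs, abs_of_pos (by positivity)]
      field_simp
    have happ : (A + lam • T) yhat = T x₀ + (lam * ‖y‖⁻¹) • T y := by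
      rw [ContinuousLinearMap.add_apply, ContinuousLinearMap.smul_apply, hAapp]
      rw [hyhat, map_smul, map_smul, smul_eq_mul, hgy]
      rw [inv_mul_cancel₀ hyn.ne', one_smul, smul_smul, mul_comm lam]
    have h1 : ‖T x₀ + (lam * ‖y‖⁻¹) • T y‖ ≤ ‖A + lam • T‖ := by
      have := (A + lam • T).le_opNorm yhat
      rw [happ, hyhatn, mul_one] at this
      exact this
    have h2 := hOP (lam * ‖y‖⁻¹)
    rw [hAnorm, ← hTx₀1]
    linarith
  -- by right symmetry, T ⊥_B A
  have hTA : BJOrth T A := hrs A hAc hAT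
  -- hence T x₀ ⊥_B A x₀ = g x₀ • T x₀, contradiction
  have horth : BJOrth (T x₀) (A x₀) := hard_lemma hX T A hTc hAc hT x₀ hTx₀ hMT hTA
  have hcontra := horth (-(g x₀)⁻¹)
  rw [hAapp, smul_smul, neg_mul, inv_mul_cancel₀ hgx₀, neg_smul, one_smul,
    add_neg_cancel, norm_zero] at hcontra
  rw [hTx₀1] at hcontra
  norm_num at hcontra
end

section
/- Let X be a reflexive real Banach space, Y a smooth real normed linear space, and T a compact linear operator from X to Y with operator norm 1 such that M_T = {x₀, −x₀} for some unit vector x₀ ∈ X. If T is left orthogonality preserving at x₀, then either the range of T is one-dimensional, or T is not a right-symmetric point of the space of compact operators from X to Y (with the operator norm). -/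
open Filter Topology Metric

/-- Hahn-Banach: a one-sided orthogonality gives a norming functional nonnegative on `w`. -/
lemma exists_support_nonneg {E : Type*} [NormedAddCommGroup E] [NormedSpace ℝ E]
    {z w : E} (hz : z ≠ 0) (h : ∀ t : ℝ, 0 ≤ t → ‖z‖ ≤ ‖z + t • w‖) :
    ∃ F : E →L[ℝ] ℝ, ‖F‖ = 1 ∧ F z = ‖z‖ ∧ 0 ≤ F w := by
  by_cases hcz : ∃ c : ℝ, w = c • z
  · obtain ⟨c, rfl⟩ := hcz
    have hc : 0 ≤ c := by
      by_contra hc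
      push_neg at hc
      have ht : (0:ℝ) ≤ -c⁻¹ := by
        rw [le_neg, neg_zero]
        exact (inv_nonpos).mpr hc.le
      have := h (-c⁻¹) ht
      rw [smul_smul, neg_mul, inv_mul_cancel₀ (ne_of_lt hc)] at this
      simp only [neg_smul, one_smul, add_neg_cancel, norm_zero] at this
      exact hz (norm_le_zero_iff.mp this)
    obtain ⟨F, hF1, hFz⟩ := exists_dual_vector ℝ z (norm_ne_zero_iff.mpr hz)
    refine ⟨F, hF1, hFz, ?_⟩
    rw [map_smul, smul_eq_mul, hFz]
    positivity
  · -- z, w linearly independent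
    have hli : LinearIndependent ℝ ![z, w] := by
      rw [LinearIndependent.pair_iff]
      intro s t hst
      rcases eq_or_ne t 0 with ht | ht
      · subst ht
        rw [zero_smul, add_zero] at hst
        exact ⟨by simpa [hz] using (smul_eq_zero.mp hst), rfl⟩
      · exfalso
        apply hcz
        refine ⟨-s/t, ?_⟩
        rw [add_eq_zero_iff_eq_neg] at hst
        have h2 : t • w = (-s) • z := by rw [neg_smul, hst, neg_neg]
        rw [div_eq_mul_inv, mul_comm, ← smul_smul, ← h2, smul_smul,
          inv_mul_cancel₀ ht, one_smul]
    -- the right derivative quotient set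
    set Q : Set ℝ := {q : ℝ | ∃ t : ℝ, 0 < t ∧ q = (‖z + t • w‖ - ‖z‖)/t} with hQdef
    have hQne : Q.Nonempty := ⟨(‖z + (1:ℝ) • w‖ - ‖z‖)/1, 1, one_pos, rfl⟩
    have hQ0 : ∀ q ∈ Q, 0 ≤ q := by
      rintro q ⟨t, ht, rfl⟩
      have := h t ht.le
      apply div_nonneg (by linarith) ht.le
    have hbdd : BddBelow Q := ⟨0, hQ0⟩
    set p : ℝ := sInf Q with hpdef
    have hp0 : 0 ≤ p := le_csInf hQne hQ0
    have hpw : p ≤ ‖w‖ := by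
      have h1 : p ≤ (‖z + (1:ℝ) • w‖ - ‖z‖)/1 := csInf_le hbdd ⟨1, one_pos, rfl⟩
      have h2 : ‖z + (1:ℝ) • w‖ ≤ ‖z‖ + ‖w‖ := by
        simpa using norm_add_le z w
      rw [div_one] at h1
      linarith
    -- key inequality
    have hkey : ∀ s : ℝ, ‖z‖ + s * p ≤ ‖z + s • w‖ := by
      intro s
      rcases lt_trichotomy s 0 with hs | hs | hs
      · -- negative side via slope inequality
        have hlb : (‖z‖ - ‖z + s • w‖)/(-s) ≤ p := by
          apply le_csInf hQne
          rintro q ⟨t, ht, rfl⟩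
          -- slope inequality
          have hconv : (t - s) * ‖z‖ ≤ t * ‖z + s • w‖ - s * ‖z + t • w‖ := by
            have hid : (t - s) • z = t • (z + s • w) + (-s) • (z + t • w) := by
              simp only [smul_add, smul_smul, neg_smul, sub_smul]
              module
            have := norm_add_le (t • (z + s • w)) ((-s) • (z + t • w))
            rw [← hid] at this
            rw [norm_smul, norm_smul, norm_smul] at this
            rw [Real.norm_eq_abs, Real.norm_eq_abs, Real.norm_eq_abs,
              abs_of_pos ht, abs_of_pos (by linarith : (0:ℝ) < t - s),
              abs_of_pos (by linarith : (0:ℝ) < -s)] at this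
            nlinarith [this]
          rw [div_le_div_iff₀ (by linarith) ht]
          nlinarith [hconv]
        rw [div_le_iff₀ (by linarith : (0:ℝ) < -s)] at hlb
        nlinarith [hlb]
      · simp [hs]
      · have : p ≤ (‖z + s • w‖ - ‖z‖)/s := csInf_le hbdd ⟨s, hs, rfl⟩
        rw [le_div_iff₀ hs] at this
        nlinarith [this]
    -- the functional on the span
    set v : Fin 2 → E := ![z, w] with hvdef
    set P : Submodule ℝ E := Submodule.span ℝ (Set.range v) with hPdef
    set f₀ : P →ₗ[ℝ] ℝ :=
      (Finsupp.linearCombination ℝ (![‖z‖, p] : Fin 2 → ℝ)).comp hli.repr with hf₀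
    have hf₀apply : ∀ x : P, f₀ x = (hli.repr x) 0 * ‖z‖ + (hli.repr x) 1 * p := by
      intro x
      simp only [hf₀, LinearMap.comp_apply]
      rw [Finsupp.linearCombination_apply, Finsupp.sum_fintype]
      · simp [Fin.sum_univ_two, mul_comm]
      · intro i; simp
    have hxrepr : ∀ x : P, (x : E) = (hli.repr x) 0 • z + (hli.repr x) 1 • w := by
      intro x
      conv_lhs => rw [← hli.linearCombination_repr x]
      rw [Finsupp.linearCombination_apply, Finsupp.sum_fintype]
      · simp [Fin.sum_univ_two, hvdef]
      · intro i; simp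
    have hf₀le : ∀ x : P, f₀ x ≤ ‖(x : E)‖ := by
      intro x
      rw [hf₀apply, hxrepr]
      generalize (hli.repr x) 0 = a
      generalize (hli.repr x) 1 = b
      rcases lt_trichotomy a 0 with ha | ha | ha
      · by_cases hab : a * ‖z‖ + b * p ≤ 0
        · exact le_trans hab (norm_nonneg _)
        · push_neg at hab
          have hb : 0 < b := by nlinarith [hp0, mul_nonneg (neg_nonneg.mpr ha.le) (norm_nonneg z)]
          have h1 : ‖b • w‖ ≤ ‖a • z + b • w‖ + ‖a • z‖ := by
            have := norm_add_le (a • z + b • w) (-(a • z))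
            simpa using this
          rw [norm_smul, norm_smul, Real.norm_eq_abs, Real.norm_eq_abs,
            abs_of_pos hb, abs_of_neg ha] at h1
          nlinarith [hpw]
      · rw [ha, zero_mul, zero_add, zero_smul, zero_add, norm_smul, Real.norm_eq_abs]
        nlinarith [le_abs_self b, abs_nonneg b, hpw, hp0]
      · have := hkey (b / a)
        have h2 : a • (z + (b/a) • w) = a • z + b • w := by
          rw [smul_add, smul_smul, mul_div_cancel₀ _ (ne_of_gt ha)]
        calc a * ‖z‖ + b * p = a * (‖z‖ + (b/a) * p) := by
              field_simp
          _ ≤ a * ‖z + (b/a) • w‖ := mul_le_mul_of_nonneg_left this ha.le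
          _ = ‖a • z + b • w‖ := by
              rw [← h2, norm_smul, Real.norm_eq_abs, abs_of_pos ha]
    -- Hahn-Banach extension
    obtain ⟨G, hGeq, hGle⟩ := exists_extension_of_le_sublinear (⟨P, f₀⟩ : E →ₗ.[ℝ] ℝ)
      (fun x => ‖x‖)
      (fun c hc x => by simp [norm_smul, abs_of_pos hc])
      (fun x y => norm_add_le x y)
      (fun x => hf₀le x)
    have hGabs : ∀ x : E, |G x| ≤ ‖x‖ := by
      intro x
      rw [abs_le]
      constructor
      · have := hGle (-x)
        rw [map_neg, norm_neg] at this
        linarith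
      · exact hGle x
    set F : E →L[ℝ] ℝ := G.mkContinuous 1 (fun x => by
      rw [Real.norm_eq_abs, one_mul]; exact hGabs x) with hF
    have hFapply : ∀ x : E, F x = G x := fun x => rfl
    have hzP : z ∈ P := Submodule.subset_span ⟨0, by simp [hvdef]⟩
    have hwP : w ∈ P := Submodule.subset_span ⟨1, by simp [hvdef]⟩
    have hreprz : hli.repr ⟨z, hzP⟩ = Finsupp.single 0 1 :=
      hli.repr_eq_single 0 ⟨z, hzP⟩ (by simp [hvdef])
    have hreprw : hli.repr ⟨w, hwP⟩ = Finsupp.single 1 1 :=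
      hli.repr_eq_single 1 ⟨w, hwP⟩ (by simp [hvdef])
    have hFz : F z = ‖z‖ := by
      have : G z = f₀ ⟨z, hzP⟩ := hGeq ⟨z, hzP⟩
      rw [hFapply, this, hf₀apply, hreprz]
      simp
    have hFw : F w = p := by
      have : G w = f₀ ⟨w, hwP⟩ := hGeq ⟨w, hwP⟩
      rw [hFapply, this, hf₀apply, hreprw]
      simp
    refine ⟨F, ?_, hFz, by rw [hFw]; exact hp0⟩
    apply le_antisymm
    · exact LinearMap.mkContinuous_norm_le _ zero_le_one _
    · have h1 : ‖z‖ ≤ ‖F‖ * ‖z‖ := by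
        calc ‖z‖ = F z := hFz.symm
          _ ≤ |F z| := le_abs_self _
          _ = ‖F z‖ := rfl
          _ ≤ ‖F‖ * ‖z‖ := F.le_opNorm z
      have hz' : 0 < ‖z‖ := norm_pos_iff.mpr hz
      exact le_of_mul_le_mul_right (by rw [one_mul]; exact h1) hz'

lemma smoothPoint_nonneg {E : Type*} [NormedAddCommGroup E] [NormedSpace ℝ E]
    {z w : E} (hz : z ≠ 0) (hsm : SmoothPoint z)
    (h : ∀ t : ℝ, 0 ≤ t → ‖z‖ ≤ ‖z + t • w‖) {G : E →L[ℝ] ℝ} (hG1 : ‖G‖ = 1)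
    (hGz : G z = ‖z‖) : 0 ≤ G w := by
  obtain ⟨F, hF1, hFz, hFw⟩ := exists_support_nonneg hz h
  obtain ⟨G₀, _, huniq⟩ := hsm
  have h1 : G = G₀ := huniq G ⟨hG1, hGz⟩
  have h2 : F = G₀ := huniq F ⟨hF1, hFz⟩
  rw [h1, ← h2]
  exact hFw

lemma smoothPoint_eq_zero {E : Type*} [NormedAddCommGroup E] [NormedSpace ℝ E]
    {z w : E} (hz : z ≠ 0) (hsm : SmoothPoint z)
    (h : BJOrth z w) {G : E →L[ℝ] ℝ} (hG1 : ‖G‖ = 1)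
    (hGz : G z = ‖z‖) : G w = 0 := by
  have h1 : 0 ≤ G w := smoothPoint_nonneg hz hsm (fun t _ => h t) hG1 hGz
  have h2 : 0 ≤ G (-w) := by
    apply smoothPoint_nonneg hz hsm (fun t ht => ?_) hG1 hGz
    have := h (-t)
    rwa [neg_smul, ← smul_neg] at this
  rw [map_neg] at h2
  linarith

lemma bjorth_of_dual {E : Type*} [NormedAddCommGroup E] [NormedSpace ℝ E]
    {z w : E} {G : E →L[ℝ] ℝ} (hG1 : ‖G‖ ≤ 1) (hGz : G z = ‖z‖) (hGw : G w = 0) :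
    BJOrth z w := by
  intro lam
  have h1 : G (z + lam • w) = ‖z‖ := by
    rw [map_add, map_smul, hGw, smul_eq_mul, mul_zero, add_zero, hGz]
  calc ‖z‖ = G (z + lam • w) := h1.symm
    _ ≤ |G (z + lam • w)| := le_abs_self _
    _ ≤ ‖G‖ * ‖z + lam • w‖ := G.le_opNorm _
    _ ≤ 1 * ‖z + lam • w‖ := by
        apply mul_le_mul_of_nonneg_right hG1 (norm_nonneg _)
    _ = ‖z + lam • w‖ := one_mul _

lemma exists_bjorth_translate {E : Type*} [NormedAddCommGroup E] [NormedSpace ℝ E]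
    {z : E} (hz : z ≠ 0) (w : E) : ∃ s : ℝ, BJOrth (w + s • z) z := by
  set φ : ℝ → ℝ := fun s => ‖w + s • z‖ with hφ
  have hφc : Continuous φ := by continuity
  set R : ℝ := (2 * ‖w‖ + 1) / ‖z‖ with hR
  have hz' : 0 < ‖z‖ := norm_pos_iff.mpr hz
  have hR0 : 0 ≤ R := by positivity
  obtain ⟨s₀, hs₀mem, hs₀min⟩ := (isCompact_Icc (a := -R) (b := R)).exists_isMinOn
    ⟨0, by constructor <;> [linarith; linarith]⟩ hφc.continuousOn
  have hmin : ∀ s : ℝ, φ s₀ ≤ φ s := by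
    intro s
    by_cases hs : s ∈ Set.Icc (-R) R
    · exact hs₀min hs
    · have habs : R < |s| := by
        simp only [Set.mem_Icc, not_and_or, not_le] at hs
        rcases hs with h' | h'
        · rw [abs_of_neg (by linarith)]; linarith
        · rw [abs_of_pos (by linarith)]; linarith
      have h1 : φ s₀ ≤ φ 0 := hs₀min ⟨by linarith, by linarith⟩
      have h2 : φ 0 = ‖w‖ := by simp [hφ]
      have h3 : |s| * ‖z‖ - ‖w‖ ≤ φ s := by
        have := norm_sub_le (w + s • z) w
        simp only [add_sub_cancel_left, norm_smul, Real.norm_eq_abs] at this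
        simp only [hφ]
        linarith
      have h4 : 2 * ‖w‖ + 1 < |s| * ‖z‖ := by
        rw [hR, div_lt_iff₀ hz'] at habs
        linarith
      linarith
  refine ⟨s₀, fun lam => ?_⟩
  have := hmin (s₀ + lam)
  simp only [hφ, add_smul] at this ⊢
  calc ‖w + s₀ • z‖ ≤ ‖w + (s₀ • z + lam • z)‖ := by rw [← add_assoc] at this ⊢; exact this
    _ = ‖w + s₀ • z + lam • z‖ := by rw [add_assoc]

lemma isCompactOperator_smulRight {X Y : Type*} [NormedAddCommGroup X] [NormedSpace ℝ X]
    [NormedAddCommGroup Y] [NormedSpace ℝ Y] (h : X →L[ℝ] ℝ) (v : Y) :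
    IsCompactOperator ⇑(h.smulRight v) := by
  refine ⟨(fun t : ℝ => t • v) '' Set.Icc (-(‖h‖ + 1)) (‖h‖ + 1),
    (isCompact_Icc).image (by continuity), ?_⟩
  apply Filter.mem_of_superset (Metric.ball_mem_nhds (0 : X) one_pos)
  intro x hx
  refine ⟨h x, ?_, rfl⟩
  rw [Set.mem_Icc, ← abs_le]
  have h1 : |h x| ≤ ‖h‖ * ‖x‖ := h.le_opNorm x
  have h2 : ‖x‖ ≤ 1 := le_of_lt (by simpa [Metric.mem_ball] using hx)
  nlinarith [norm_nonneg h, h1, h2, h.opNorm_nonneg]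

open Filter in
lemma neBot_inf_comap {α β : Type*} [TopologicalSpace β] {F : Filter α} {u : α → β} {y : β}
    (h : ClusterPt y (Filter.map u F)) : (F ⊓ Filter.comap u (𝓝 y)).NeBot := by
  apply Filter.NeBot.of_map (m := u)
  rw [Filter.push_pull, inf_comm]
  exact h.neBot

set_option maxHeartbeats 4000000 in
open Filter Topology Metric NormedSpace in
lemma key_cluster {X Y : Type*} [NormedAddCommGroup X] [NormedSpace ℝ X]
    [NormedAddCommGroup Y] [NormedSpace ℝ Y]
    (hX : ReflexiveSpace X)
    (T A : X →L[ℝ] Y) (hTc : IsCompactOperator ⇑T) (hAc : IsCompactOperator ⇑A)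
    (hT : ‖T‖ = 1) {x₀ : X}
    (hMT : {x : X | ‖x‖ = 1 ∧ ‖T x‖ = ‖T‖} = {x₀, -x₀})
    (hTA : BJOrth T A) :
    ∀ s : ℝ, 0 ≤ s → 1 ≤ ‖T x₀ + s • A x₀‖ := by
  have hTx₀ : ‖T x₀‖ = 1 := by
    have hmem : x₀ ∈ ({x₀, -x₀} : Set X) := Set.mem_insert _ _
    rw [← hMT] at hmem
    rw [hmem.2, hT]
  -- the sequence of almost norming points
  set ε : ℕ → ℝ := fun n => ((n : ℝ) + 2)⁻¹ with hεdef
  have hε0 : ∀ n, 0 < ε n := fun n => by positivity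
  have hεhalf : ∀ n, ε n ≤ 1/2 := by
    intro n
    rw [hεdef]
    rw [inv_le_comm₀ (by positivity) (by norm_num)]
    push_cast
    linarith [Nat.cast_nonneg (α := ℝ) n]
  have hεlim : Tendsto ε atTop (𝓝 0) := by
    apply tendsto_inv_atTop_zero.comp
    apply tendsto_atTop_add_const_right
    exact tendsto_natCast_atTop_atTop
  have hSn : ∀ n, 1 ≤ ‖T + ε n • A‖ := fun n => le_trans (le_of_eq hT.symm) (hTA (ε n))
  have hchoice : ∀ n : ℕ, ∃ u : X, ‖u‖ < 1 ∧ 1 - ε n * ε n < ‖(T + ε n • A) u‖ := by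
    intro n
    apply ContinuousLinearMap.exists_lt_apply_of_lt_opNorm
    have := hε0 n
    nlinarith [hSn n]
  choose u hu1 hu2 using hchoice
  -- weak cluster point machinery
  set ι := NormedSpace.inclusionInDoubleDual ℝ X with hι
  set ψ : ℕ → WeakDual ℝ (StrongDual ℝ X) := fun n => StrongDual.toWeakDual (ι (u n)) with hψ
  set S : Set (WeakDual ℝ (StrongDual ℝ X)) :=
    WeakDual.toStrongDual ⁻¹' Metric.closedBall 0 1 with hS
  have hScpt : IsCompact S := WeakDual.isCompact_closedBall (𝕜 := ℝ) 0 1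
  have hψS : ∀ n, ψ n ∈ S := by
    intro n
    simp only [hS, Set.mem_preimage, mem_closedBall_zero_iff]
    have h1 : ‖ι (u n)‖ ≤ ‖u n‖ := double_dual_bound ℝ X (u n)
    have := hu1 n
    refine (mem_closedBall_zero_iff (E := StrongDual ℝ (StrongDual ℝ X))).mpr ?_
    calc ‖(WeakDual.toStrongDual (ψ n) : StrongDual ℝ (StrongDual ℝ X))‖ = ‖ι (u n)‖ := rfl
      _ ≤ 1 := by linarith
  have hmapne : (Filter.map ψ atTop).NeBot := Filter.map_neBot
  have hmaple : Filter.map ψ atTop ≤ Filter.principal S :=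
    Filter.le_principal_iff.mpr (Filter.mem_map.mpr (Filter.univ_mem' hψS))
  obtain ⟨ξ, hξS, hclus⟩ := hScpt.exists_clusterPt hmaple
  obtain ⟨x, hx⟩ := hX (WeakDual.toStrongDual ξ)
  have hξnorm : ‖(WeakDual.toStrongDual ξ : StrongDual ℝ (StrongDual ℝ X))‖ ≤ 1 := by
    exact (mem_closedBall_zero_iff (E := StrongDual ℝ (StrongDual ℝ X))).mp hξS
  have hx1 : ‖x‖ ≤ 1 := by
    rcases eq_or_ne x 0 with h0 | h0
    · simp [h0]
    · obtain ⟨f, hf1, hfx⟩ := exists_dual_vector ℝ x (norm_ne_zero_iff.mpr h0)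
      have h2 : ι x f = f x := rfl
      calc ‖x‖ = f x := hfx.symm
        _ = ι x f := h2.symm
        _ ≤ |ι x f| := le_abs_self _
        _ ≤ ‖ι x‖ * ‖f‖ := (ι x).le_opNorm f
        _ = ‖ι x‖ := by rw [hf1, mul_one]
        _ ≤ 1 := by rw [hx]; exact hξnorm
  set L : Filter ℕ := atTop ⊓ Filter.comap ψ (𝓝 ξ) with hL
  have hLne : L.NeBot := neBot_inf_comap hclus
  have hLatTop : L ≤ atTop := inf_le_left
  have hψL : Tendsto ψ L (𝓝 ξ) := tendsto_comap.mono_left inf_le_right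
  have hweak : ∀ φ : StrongDual ℝ X, Tendsto (fun n => φ (u n)) L (𝓝 (φ x)) := by
    intro φ
    have h1 : Tendsto (fun q : WeakDual ℝ (StrongDual ℝ X) => q φ) (𝓝 ξ) (𝓝 (ξ φ)) :=
      (WeakDual.eval_continuous φ).tendsto ξ
    have h2 : Tendsto (fun n => ψ n φ) L (𝓝 (ξ φ)) := h1.comp hψL
    have h3 : ∀ n, ψ n φ = φ (u n) := fun n => rfl
    have h4 : ξ φ = φ x := by
      have h5 : ι x φ = φ x := rfl
      rw [← h5, hx]
      rfl
    simp only [h3, h4] at h2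
    exact h2
  -- norm cluster points through compact operators
  have claim : ∀ (B : X →L[ℝ] Y), IsCompactOperator ⇑B → ∀ L' : Filter ℕ, L'.NeBot → L' ≤ L →
      ∃ L'' : Filter ℕ, L''.NeBot ∧ L'' ≤ L' ∧ Tendsto (fun n => B (u n)) L'' (𝓝 (B x)) := by
    intro B hBc L' hL'ne hL'le
    have hBc' : IsCompactOperator ⇑(B : X →ₗ[ℝ] Y) := by
      rw [ContinuousLinearMap.coe_coe]
      exact hBc
    obtain ⟨K, hK, hBK⟩ := hBc'.image_closedBall_subset_compact (𝕜₁ := ℝ) 1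
    have hBu : ∀ n, B (u n) ∈ K := by
      intro n
      exact hBK ⟨u n, mem_closedBall_zero_iff.mpr (hu1 n).le, rfl⟩
    have hF'ne : (Filter.map (fun n => B (u n)) L').NeBot := Filter.map_neBot
    have hF'le : Filter.map (fun n => B (u n)) L' ≤ Filter.principal K :=
      Filter.le_principal_iff.mpr (Filter.mem_map.mpr (Filter.univ_mem' hBu))
    obtain ⟨y, _, hyclus⟩ := hK.exists_clusterPt hF'le
    refine ⟨L' ⊓ Filter.comap (fun n => B (u n)) (𝓝 y), neBot_inf_comap hyclus, inf_le_left, ?_⟩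
    have hTend : Tendsto (fun n => B (u n)) (L' ⊓ Filter.comap (fun n => B (u n)) (𝓝 y)) (𝓝 y) :=
      tendsto_comap.mono_left inf_le_right
    have hyBx : y = B x := by
      haveI := neBot_inf_comap hyclus
      rw [NormedSpace.eq_iff_forall_dual_eq ℝ]
      intro φ'
      have h1 : Tendsto (fun n => φ' (B (u n))) (L' ⊓ Filter.comap (fun n => B (u n)) (𝓝 y))
          (𝓝 (φ' y)) := (φ'.continuous.tendsto y).comp hTend
      have h2 : Tendsto (fun n => φ' (B (u n))) (L' ⊓ Filter.comap (fun n => B (u n)) (𝓝 y))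
          (𝓝 (φ' (B x))) := by
        have h3 := hweak (φ'.comp B)
        exact h3.mono_left (le_trans inf_le_left hL'le)
      exact tendsto_nhds_unique h1 h2
    rw [← hyBx]
    exact hTend
  obtain ⟨L₂, hL₂ne, hL₂le, hTlim⟩ := claim T hTc L hLne le_rfl
  obtain ⟨L₃, hL₃ne, hL₃le, hAlim⟩ := claim A hAc L₂ hL₂ne hL₂le
  have hTlim₃ : Tendsto (fun n => T (u n)) L₃ (𝓝 (T x)) := hTlim.mono_left hL₃le
  have hL₃atTop : L₃ ≤ atTop := le_trans hL₃le (le_trans hL₂le hLatTop)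
  haveI : L₃.NeBot := hL₃ne
  -- identify the cluster point with ±x₀
  have happly : ∀ n, (T + ε n • A) (u n) = T (u n) + ε n • A (u n) := by
    intro n
    simp [ContinuousLinearMap.add_apply, ContinuousLinearMap.smul_apply]
  have hAu : ∀ n, ‖A (u n)‖ ≤ ‖A‖ := by
    intro n
    calc ‖A (u n)‖ ≤ ‖A‖ * ‖u n‖ := A.le_opNorm _
      _ ≤ ‖A‖ * 1 := mul_le_mul_of_nonneg_left (hu1 n).le A.opNorm_nonneg
      _ = ‖A‖ := mul_one _
  have hTu : ∀ n, ‖T (u n)‖ ≤ 1 := by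
    intro n
    calc ‖T (u n)‖ ≤ ‖T‖ * ‖u n‖ := T.le_opNorm _
      _ ≤ 1 * 1 := by
          rw [hT]
          exact mul_le_mul_of_nonneg_left (hu1 n).le zero_le_one
      _ = 1 := one_mul _
  have hTn_lb : ∀ n, 1 - ε n * ε n - ε n * ‖A‖ ≤ ‖T (u n)‖ := by
    intro n
    have h1 := hu2 n
    rw [happly n] at h1
    have h2 : ‖T (u n) + ε n • A (u n)‖ ≤ ‖T (u n)‖ + ε n * ‖A (u n)‖ := by
      calc ‖T (u n) + ε n • A (u n)‖ ≤ ‖T (u n)‖ + ‖ε n • A (u n)‖ := norm_add_le _ _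
        _ = ‖T (u n)‖ + ε n * ‖A (u n)‖ := by
            rw [norm_smul, Real.norm_eq_abs, abs_of_pos (hε0 n)]
    nlinarith [hAu n, hε0 n]
  have hTxlim : Tendsto (fun n => ‖T (u n)‖) L₃ (𝓝 ‖T x‖) := hTlim₃.norm
  have hblim : Tendsto (fun n => 1 - ε n * ε n - ε n * ‖A‖) atTop (𝓝 1) := by
    have h1 : Tendsto (fun n => 1 - ε n * ε n - ε n * ‖A‖) atTop (𝓝 (1 - 0 * 0 - 0 * ‖A‖)) :=
      (tendsto_const_nhds.sub (hεlim.mul hεlim)).sub (hεlim.mul tendsto_const_nhds)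
    simpa using h1
  have hTx1 : 1 ≤ ‖T x‖ :=
    le_of_tendsto_of_tendsto (hblim.mono_left hL₃atTop) hTxlim
      (Filter.Eventually.of_forall hTn_lb)
  have hTxle : ‖T x‖ ≤ ‖x‖ := by
    have := T.le_opNorm x
    rwa [hT, one_mul] at this
  have hx_eq : x = x₀ ∨ x = -x₀ := by
    have hx_norm : ‖x‖ = 1 := le_antisymm hx1 (le_trans hTx1 hTxle)
    have hTx_norm : ‖T x‖ = ‖T‖ := by
      rw [hT]
      exact le_antisymm (by rw [← hx_norm]; exact hTxle) hTx1
    have hxmem : x ∈ ({x₀, -x₀} : Set X) := by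
      rw [← hMT]
      exact ⟨hx_norm, hTx_norm⟩
    simpa using hxmem
  -- main estimate
  intro s hs
  rcases eq_or_lt_of_le hs with hs0 | hs0
  · rw [← hs0, zero_smul, add_zero]
    exact le_of_eq hTx₀.symm
  have hsn : ∀ n : ℕ, ε n ≤ s → 1 - ε n * ε n - s * ε n ≤ ‖T (u n) + s • A (u n)‖ := by
    intro n hns
    have h1 := hu2 n
    rw [happly n] at h1
    have hvpos : 0 < ‖T (u n) + ε n • A (u n)‖ := by nlinarith [hεhalf n, hε0 n]
    have hvne : T (u n) + ε n • A (u n) ≠ 0 := by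
      intro h0
      rw [h0, norm_zero] at hvpos
      exact lt_irrefl 0 hvpos
    obtain ⟨g, hg1, hgv0⟩ := exists_dual_vector ℝ (T (u n) + ε n • A (u n)) (norm_ne_zero_iff.mpr hvne)
    have hgv : g (T (u n) + ε n • A (u n)) = ‖T (u n) + ε n • A (u n)‖ := by
      exact_mod_cast hgv0
    have hgT : g (T (u n)) ≤ 1 := by
      calc g (T (u n)) ≤ |g (T (u n))| := le_abs_self _
        _ ≤ ‖g‖ * ‖T (u n)‖ := g.le_opNorm _
        _ = ‖T (u n)‖ := by rw [hg1, one_mul]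
        _ ≤ 1 := hTu n
    have heq : g (T (u n) + ε n • A (u n)) = g (T (u n)) + ε n * g (A (u n)) := by
      rw [map_add, map_smul, smul_eq_mul]
    have hgA : -(ε n) ≤ g (A (u n)) := by
      have h2 : 1 - ε n * ε n < g (T (u n)) + ε n * g (A (u n)) := by
        rw [← heq, hgv]
        exact h1
      nlinarith [hε0 n]
    have h3 : g (T (u n) + s • A (u n)) = g (T (u n) + ε n • A (u n)) + (s - ε n) * g (A (u n)) := by
      rw [map_add, map_add, map_smul, map_smul, smul_eq_mul, smul_eq_mul]
      ring
    have h4 : 1 - ε n * ε n - s * ε n ≤ g (T (u n) + s • A (u n)) := by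
      rw [h3, hgv]
      have hprod : 0 ≤ (s - ε n) * (g (A (u n)) + ε n) :=
        mul_nonneg (sub_nonneg.mpr hns) (by linarith [hgA])
      nlinarith [hprod, h1]
    calc 1 - ε n * ε n - s * ε n ≤ g (T (u n) + s • A (u n)) := h4
      _ ≤ |g (T (u n) + s • A (u n))| := le_abs_self _
      _ ≤ ‖g‖ * ‖T (u n) + s • A (u n)‖ := g.le_opNorm _
      _ = ‖T (u n) + s • A (u n)‖ := by rw [hg1, one_mul]
  have hLHS : Tendsto (fun n => ‖T (u n) + s • A (u n)‖) L₃ (𝓝 ‖T x + s • A x‖) :=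
    (hTlim₃.add (hAlim.const_smul s)).norm
  have hRHS : Tendsto (fun n => 1 - ε n * ε n - s * ε n) atTop (𝓝 1) := by
    have h1 : Tendsto (fun n => 1 - ε n * ε n - s * ε n) atTop (𝓝 (1 - 0 * 0 - s * 0)) :=
      (tendsto_const_nhds.sub (hεlim.mul hεlim)).sub (hεlim.const_mul s)
    simpa using h1
  have hev : ∀ᶠ n in L₃, 1 - ε n * ε n - s * ε n ≤ ‖T (u n) + s • A (u n)‖ := by
    have h1 : ∀ᶠ n in atTop, ε n < s := hεlim.eventually_lt_const hs0
    exact (h1.filter_mono hL₃atTop).mono fun n hn => hsn n hn.le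
  have hfinal : 1 ≤ ‖T x + s • A x‖ :=
    le_of_tendsto_of_tendsto (hRHS.mono_left hL₃atTop) hLHS hev
  rcases hx_eq with rfl | hxeq
  · exact hfinal
  · rw [hxeq, map_neg, map_neg, smul_neg, ← neg_add, norm_neg] at hfinal
    exact hfinal


set_option maxHeartbeats 1000000

/-- Let `X` be a reflexive Banach space, `Y` a smooth normed space, and
`T : X → Y` a norm-one compact operator with `M_T = {x₀, -x₀}`, left orthogonality preserving
at `x₀`. Then either the range of `T` is one-dimensional, or `T` is not a right-symmetric
point of the space of compact operators from `X` to `Y`. -/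
theorem rankOne_or_not_rightSymmetric {X Y : Type*}
    [NormedAddCommGroup X] [NormedSpace ℝ X] [CompleteSpace X]
    [NormedAddCommGroup Y] [NormedSpace ℝ Y]
    (hX : ReflexiveSpace X)
    (hYsmooth : ∀ y : Y, y ≠ 0 → SmoothPoint y)
    (T : X →L[ℝ] Y) (hTc : IsCompactOperator T) (hT : ‖T‖ = 1)
    (x₀ : X) (hx₀ : ‖x₀‖ = 1)
    (hMT : {x : X | ‖x‖ = 1 ∧ ‖T x‖ = ‖T‖} = {x₀, -x₀})
    (hop : LeftOPAt T x₀) :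
    Module.finrank ℝ (LinearMap.range (T : X →ₗ[ℝ] Y)) = 1 ∨ ¬ RightSymmetricCompactOp T := by
  have hx₀ne : x₀ ≠ 0 := by
    intro h0
    rw [h0, norm_zero] at hx₀
    exact zero_ne_one hx₀
  have hx₀M : ‖T x₀‖ = ‖T‖ := by
    have hmem : x₀ ∈ ({x₀, -x₀} : Set X) := Set.mem_insert _ _
    rw [← hMT] at hmem
    exact hmem.2
  have hTx₀1 : ‖T x₀‖ = 1 := by rw [hx₀M, hT]
  have hTx₀ne : T x₀ ≠ 0 := by
    intro h0
    rw [h0, norm_zero] at hTx₀1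
    exact zero_ne_one hTx₀1
  obtain ⟨f, hf1, hfx₀0⟩ := exists_dual_vector ℝ x₀ (norm_ne_zero_iff.mpr hx₀ne)
  have hfx₀ : f x₀ = 1 := by
    have : f x₀ = ‖x₀‖ := by exact_mod_cast hfx₀0
    rw [this, hx₀]
  obtain ⟨g, ⟨hg1, hgTx₀0⟩, hguniq⟩ := hYsmooth (T x₀) hTx₀ne
  have hgTx₀ : g (T x₀) = 1 := by rw [hgTx₀0, hTx₀1]
  have hker : ∀ y : X, f y = 0 → BJOrth x₀ y := by
    intro y hy lam
    have h1 : f (x₀ + lam • y) = 1 := by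
      rw [map_add, map_smul, hy, smul_eq_mul, mul_zero, add_zero, hfx₀]
    calc ‖x₀‖ = 1 := hx₀
      _ = f (x₀ + lam • y) := h1.symm
      _ ≤ |f (x₀ + lam • y)| := le_abs_self _
      _ ≤ ‖f‖ * ‖x₀ + lam • y‖ := f.le_opNorm _
      _ = ‖x₀ + lam • y‖ := by rw [hf1, one_mul]
  have hgT : ∀ y : X, f y = 0 → g (T y) = 0 := fun y hy =>
    smoothPoint_eq_zero hTx₀ne (hYsmooth _ hTx₀ne) (hop y (hker y hy)) hg1 hgTx₀0
  by_cases hy₀ : ∃ y : X, f y = 0 ∧ T y ≠ 0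
  · right
    intro hRS
    obtain ⟨y₀, hy₀f, hy₀T⟩ := hy₀
    have hgood : ∃ t : ℝ, 0 < t ∧ t * ‖y₀‖ < 1 ∧
        ∃ v : Y, BJOrth v (T x₀ + t • T y₀) ∧ g v ≠ 0 := by
      by_contra hbad
      push_neg at hbad
      obtain ⟨G, ⟨hG1, hGTy₀⟩, _⟩ := hYsmooth (T y₀) hy₀T
      have hstep : ∀ t : ℝ, 0 < t → t * ‖y₀‖ < 1 → G (T x₀) = -t * ‖T y₀‖ := by
        intro t ht0 ht1
        have hz : g (T x₀ + t • T y₀) = 1 := by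
          rw [map_add, map_smul, hgT y₀ hy₀f, smul_eq_mul, mul_zero, add_zero, hgTx₀]
        have hzne : T x₀ + t • T y₀ ≠ 0 := by
          intro h0
          rw [h0, map_zero] at hz
          exact zero_ne_one hz
        obtain ⟨sm, hsm⟩ := exists_bjorth_translate hzne (T y₀)
        have hgv : g (T y₀ + sm • (T x₀ + t • T y₀)) = 0 := hbad t ht0 ht1 _ hsm
        have hsm0 : sm = 0 := by
          rw [map_add, map_smul, hgT y₀ hy₀f, hz, smul_eq_mul, mul_one, zero_add] at hgv
          exact hgv
        rw [hsm0, zero_smul, add_zero] at hsm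
        have hG0 : G (T x₀ + t • T y₀) = 0 :=
          smoothPoint_eq_zero hy₀T (hYsmooth _ hy₀T) hsm hG1 hGTy₀
        rw [map_add, map_smul, hGTy₀, smul_eq_mul] at hG0
        linarith
      have hc : (0:ℝ) < ‖y₀‖ + 1 := by positivity
      have hlt : ∀ d : ℝ, ‖y₀‖ + 1 ≤ d → (1/d) * ‖y₀‖ < 1 := by
        intro d hd
        rw [div_mul_eq_mul_div, one_mul, div_lt_one (by linarith)]
        linarith
      have h1 := hstep (1/(‖y₀‖ + 1)) (by positivity) (hlt _ le_rfl)
      have h2 := hstep (1/(2*(‖y₀‖ + 1))) (by positivity)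
        (hlt _ (by linarith [norm_nonneg y₀]))
      have hTy₀pos : 0 < ‖T y₀‖ := norm_pos_iff.mpr hy₀T
      rw [h1] at h2
      have hcc : (1:ℝ)/(2*(‖y₀‖ + 1)) < 1/(‖y₀‖ + 1) := by
        rw [div_lt_div_iff₀ (by positivity) hc]
        nlinarith
      nlinarith [h2, hTy₀pos, hcc]
    obtain ⟨t, ht0, ht1, v, hvBJ, hgv⟩ := hgood
    set u' : X := x₀ + t • y₀ with hu'
    have hfu' : f u' = 1 := by
      rw [hu', map_add, map_smul, hy₀f, smul_eq_mul, mul_zero, add_zero, hfx₀]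
    have hu'norm : 1 ≤ ‖u'‖ := by
      calc 1 = f u' := hfu'.symm
        _ ≤ |f u'| := le_abs_self _
        _ ≤ ‖f‖ * ‖u'‖ := f.le_opNorm _
        _ = ‖u'‖ := by rw [hf1, one_mul]
    have hu'pos : 0 < ‖u'‖ := by linarith
    have hu'ne : u' ≠ 0 := by
      intro h0
      rw [h0, norm_zero] at hu'pos
      exact lt_irrefl 0 hu'pos
    have hTu' : T u' = T x₀ + t • T y₀ := by rw [hu', map_add, map_smul]
    obtain ⟨h, hh1, hhu'0⟩ := exists_dual_vector ℝ u' (norm_ne_zero_iff.mpr hu'ne)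
    have hhu' : h u' = ‖u'‖ := by exact_mod_cast hhu'0
    have hhx₀ : 0 < h x₀ := by
      have e1 : h x₀ = h u' - t * h y₀ := by
        rw [hu', map_add, map_smul, smul_eq_mul]
        ring
      have e2 : h y₀ ≤ ‖y₀‖ := by
        calc h y₀ ≤ |h y₀| := le_abs_self _
          _ ≤ ‖h‖ * ‖y₀‖ := h.le_opNorm _
          _ = ‖y₀‖ := by rw [hh1, one_mul]
      rw [e1, hhu']
      nlinarith [hu'norm, ht1, ht0, e2]
    set A : X →L[ℝ] Y := h.smulRight v with hA
    have hAx : ∀ x : X, A x = h x • v := fun x => rfl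
    have hAc : IsCompactOperator ⇑A := isCompactOperator_smulRight h v
    have hAnorm : ‖A‖ = ‖v‖ := by
      rw [hA, ContinuousLinearMap.norm_smulRight_apply, hh1, one_mul]
    have hAT : BJOrth A T := by
      intro lam
      have e1 : (A + lam • T) u' = ‖u'‖ • v + lam • T u' := by
        rw [ContinuousLinearMap.add_apply, ContinuousLinearMap.smul_apply, hAx, hhu']
      have e2 : ‖u'‖ • v + lam • T u' = ‖u'‖ • (v + (lam/‖u'‖) • T u') := by
        rw [smul_add, smul_smul, mul_div_cancel₀ _ (ne_of_gt hu'pos)]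
      have e3 : ‖u'‖ * ‖v‖ ≤ ‖(A + lam • T) u'‖ := by
        rw [e1, e2, norm_smul, Real.norm_eq_abs, abs_of_pos hu'pos]
        apply mul_le_mul_of_nonneg_left _ hu'pos.le
        have := hvBJ (lam/‖u'‖)
        rwa [← hTu'] at this
      have e4 : ‖(A + lam • T) u'‖ ≤ ‖A + lam • T‖ * ‖u'‖ :=
        (A + lam • T).le_opNorm u'
      rw [hAnorm]
      have e5 : ‖u'‖ * ‖v‖ ≤ ‖A + lam • T‖ * ‖u'‖ := le_trans e3 e4
      have e6 : ‖v‖ * ‖u'‖ ≤ ‖A + lam • T‖ * ‖u'‖ := by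
        rw [mul_comm ‖v‖ ‖u'‖]
        exact e5
      exact le_of_mul_le_mul_right e6 hu'pos
    have hTA : BJOrth T A := hRS A hAc hAT
    have hTA' : BJOrth T (-A) := by
      intro lam
      have e1 : T + lam • (-A) = T + (-lam) • A := by
        rw [smul_neg, ← neg_smul]
      rw [e1]
      exact hTA (-lam)
    have hge : 0 ≤ g (A x₀) := by
      apply smoothPoint_nonneg hTx₀ne (hYsmooth _ hTx₀ne) ?_ hg1 hgTx₀0
      intro s hs0
      rw [hTx₀1]
      exact key_cluster hX T A hTc hAc hT hMT hTA s hs0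
    have hle : g (A x₀) ≤ 0 := by
      have h2 : 0 ≤ g ((-A) x₀) := by
        apply smoothPoint_nonneg hTx₀ne (hYsmooth _ hTx₀ne) ?_ hg1 hgTx₀0
        intro s hs0
        rw [hTx₀1]
        exact key_cluster hX T (-A) hTc hAc.neg hT hMT hTA' s hs0
      rw [ContinuousLinearMap.neg_apply, map_neg] at h2
      linarith
    have hzero : g (A x₀) = 0 := le_antisymm hle hge
    rw [hAx, map_smul, smul_eq_mul] at hzero
    exact hgv ((mul_eq_zero.mp hzero).resolve_left (ne_of_gt hhx₀))
  · left
    push_neg at hy₀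
    have hrange : LinearMap.range (T : X →ₗ[ℝ] Y) = Submodule.span ℝ {T x₀} := by
      apply le_antisymm
      · rintro _ ⟨x, rfl⟩
        have h1 : f (x - f x • x₀) = 0 := by
          rw [map_sub, map_smul, smul_eq_mul, hfx₀, mul_one, sub_self]
        have h2 : T (x - f x • x₀) = 0 := hy₀ _ h1
        rw [map_sub, map_smul, sub_eq_zero] at h2
        rw [ContinuousLinearMap.coe_coe, h2]
        exact Submodule.smul_mem _ _ (Submodule.mem_span_singleton_self _)
      · rw [Submodule.span_le]
        rintro z hz
        rw [Set.mem_singleton_iff] at hz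
        rw [hz, SetLike.mem_coe, LinearMap.mem_range]
        exact ⟨x₀, rfl⟩
    rw [hrange]
    exact finrank_span_singleton hTx₀ne
end
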